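/- arXiv:2304.04693 — 5 statements merged into one kernel-verified Lean document; each statement's English description precedes it below -/
import Mathlib

section
/- Let d ≥ 1 and 0 ≤ t ≤ d−1, and let Γ = Γ_{t,d}. If a ℤ₂-symmetric graph (G,*) with |V(G)| ≥ 2d is Γ-rigid in ℝ^d, then |E(G)| ≥ d·|V(G)| − 2·min{ C(t+1,2) + C(d−t,2), C(d+1,2) − C(t+1,2) − C(d−t,2) }, where C(a,2) denotes the binomial coefficient 'a choose 2'. -/
open Matrix

/-! ### Frameworks and infinitesimal rigidity -/

/-- An infinitesimal motion of the framework given by the graph `G` restricted to the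
vertex set `W`, realised by `p` in `ℝ^d`. -/
def IsMotion {V : Type*} (d : ℕ) (G : SimpleGraph V) (W : Set V)
    (p q : V → Fin d → ℝ) : Prop :=
  ∀ u ∈ W, ∀ v ∈ W, G.Adj u v → (p u - p v) ⬝ᵥ (q u - q v) = 0

/-- A trivial infinitesimal motion: `q = S ∘ p + c` on `W` for a skew-symmetric `S`. -/
def IsTrivialMotion {V : Type*} (d : ℕ) (W : Set V) (p q : V → Fin d → ℝ) : Prop :=
  ∃ (S : Matrix (Fin d) (Fin d) ℝ) (c : Fin d → ℝ), Sᵀ = -S ∧ ∀ u ∈ W, q u = S *ᵥ p u + c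

/-- The framework on vertex set `W` with edges those of `G` inside `W`, realised by `p`,
is infinitesimally rigid. -/
def IsInfRigid {V : Type*} (d : ℕ) (G : SimpleGraph V) (W : Set V)
    (p : V → Fin d → ℝ) : Prop :=
  ∀ q : V → Fin d → ℝ, IsMotion d G W p q → IsTrivialMotion d W p q

/-- `σ` is a free involution on `X`, i.e. a vertex pairing on `X`. -/
structure IsVertexPairing {V : Type*} (X : Set V) (σ : V → V) : Prop where
  mapsTo : ∀ x ∈ X, σ x ∈ X
  invol : ∀ x ∈ X, σ (σ x) = x
  free : ∀ x ∈ X, σ x ≠ x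

/-- A non-adjacent vertex pairing of the graph `G`. -/
def IsNonAdjPairing {V : Type*} (G : SimpleGraph V) (X : Set V) (σ : V → V) : Prop :=
  IsVertexPairing X σ ∧ ∀ x ∈ X, ¬ G.Adj x (σ x)

/-- `(G, σ)` is a `ℤ₂`-symmetric graph: `σ` is a free involutive automorphism of `G`
with `u (σ u)` never an edge. -/
def IsZ2SymGraph {V : Type*} (G : SimpleGraph V) (σ : V → V) : Prop :=
  (∀ x, σ (σ x) = x) ∧ (∀ x, σ x ≠ x) ∧ (∀ u v, G.Adj u v ↔ G.Adj (σ u) (σ v)) ∧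
    ∀ x, ¬ G.Adj x (σ x)

/-- `γ` generates a point group of `ℝ^d` of order two: it is orthogonal, an involution
and not the identity. -/
def IsPointGroupInvolution {d : ℕ} (γ : Matrix (Fin d) (Fin d) ℝ) : Prop :=
  γᵀ * γ = 1 ∧ γ * γ = 1 ∧ γ ≠ 1

/-- The diagonal matrix `I_{t,d}` whose first `t` diagonal entries are `1` and whose
remaining `d - t` diagonal entries are `-1`; it generates the point group `Γ_{t,d}`. -/
def Itd (t d : ℕ) : Matrix (Fin d) (Fin d) ℝ :=
  Matrix.diagonal fun i => if (i : ℕ) < t then (1 : ℝ) else -1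

/-- `p` is `Γ`-symmetric with respect to the vertex pairing `σ : X → X`, where `Γ` is
generated by `γ`. -/
def IsGammaSym {V : Type*} {d : ℕ} (X : Set V) (σ : V → V)
    (γ : Matrix (Fin d) (Fin d) ℝ) (p : V → Fin d → ℝ) : Prop :=
  ∀ x ∈ X, p (σ x) = γ *ᵥ p x

/-- `(G|_W, σ)` is `Γ`-rigid in `ℝ^d`, where `Γ` is the point group generated by `γ`:
some `Γ`-symmetric realisation is infinitesimally rigid. -/
def GammaRigid {V : Type*} (d : ℕ) (G : SimpleGraph V) (W X : Set V) (σ : V → V)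
    (γ : Matrix (Fin d) (Fin d) ℝ) : Prop :=
  ∃ p : V → Fin d → ℝ, IsGammaSym X σ γ p ∧ IsInfRigid d G W p

/-- The set `X_W = (X ∩ W) ∩ (X ∩ W)*`. -/
def pairedPart {V : Type*} (X : Set V) (σ : V → V) (W : Set V) : Set V :=
  (X ∩ W) ∩ (σ '' (X ∩ W))

/-- The simple graph `G/uv` obtained from `G` by contracting `v` onto `u`. -/
def contractEdge {V : Type*} (G : SimpleGraph V) (u v : V) : SimpleGraph V :=
  SimpleGraph.fromRel fun a b =>
    a ≠ v ∧ b ≠ v ∧ (G.Adj a b ∨ (a = u ∧ G.Adj v b) ∨ (b = u ∧ G.Adj a v))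

/-- The row of the rigidity matrix indexed by an (unordered) edge `e`, viewed as the
linear functional `q ↦ (p u - p v) ⬝ᵥ (q u - q v)`. -/
def rigidityRow {V : Type*} (d : ℕ) (p : V → Fin d → ℝ) (e : Sym2 V)
    (q : V → Fin d → ℝ) : ℝ :=
  Sym2.lift ⟨fun u v => (p u - p v) ⬝ᵥ (q u - q v), fun u v => by
    show (p u - p v) ⬝ᵥ (q u - q v) = (p v - p u) ⬝ᵥ (q v - q u)
    rw [show p u - p v = -(p v - p u) from (neg_sub _ _).symm,
      show q u - q v = -(q v - q u) from (neg_sub _ _).symm,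
      neg_dotProduct, dotProduct_neg, neg_neg]⟩ e

/-- The rigidity matrix `R(G,p)` is row-independent. -/
def RowIndependent {V : Type*} (d : ℕ) (G : SimpleGraph V) (p : V → Fin d → ℝ) : Prop :=
  LinearIndependent ℝ fun e : G.edgeSet => rigidityRow d p e.1

/-- The graph obtained from `G` by splitting `u'` from `u` along `C₁` (deleting `D₁`)
and then splitting `v'` from `v` along `C₂` (deleting `D₂`).  The new vertices are
`u' = Sum.inr 0` and `v' = Sum.inr 1`. -/
def doubleSplit {V : Type*} (G : SimpleGraph V) (u v : V) (C₁ D₁ C₂ D₂ : Set V) :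
    SimpleGraph (V ⊕ Fin 2) :=
  SimpleGraph.fromRel fun a b =>
    (∃ s t : V, a = Sum.inl s ∧ b = Sum.inl t ∧ G.Adj s t ∧
        ¬(s = u ∧ t ∈ D₁) ∧ ¬(t = u ∧ s ∈ D₁) ∧ ¬(s = v ∧ t ∈ D₂) ∧ ¬(t = v ∧ s ∈ D₂)) ∨
    (∃ z : V, a = Sum.inr 0 ∧ b = Sum.inl z ∧ (z ∈ C₁ ∪ D₁ ∨ z = u)) ∨
    (∃ z : V, a = Sum.inr 1 ∧ b = Sum.inl z ∧ (z ∈ C₂ ∪ D₂ ∨ z = v))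

/-! ### Simplicial multicomplexes -/

/-- The vertex set `V(S)` of a simplicial multicomplex. -/
def complexVerts {V : Type*} [DecidableEq V] (S : Multiset (Finset V)) : Finset V :=
  S.toFinset.sup id

/-- The edge set `E(S)`: all 2-element subsets of facets. -/
def complexEdges {V : Type*} [DecidableEq V] (S : Multiset (Finset V)) :
    Finset (Finset V) :=
  S.toFinset.biUnion fun F => Finset.powersetCard 2 F

/-- Adjacency in the graph `G(S)` of a simplicial multicomplex. -/
def complexAdj {V : Type*} (S : Multiset (Finset V)) (a b : V) : Prop :=
  a ≠ b ∧ ∃ F ∈ S, a ∈ F ∧ b ∈ F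

/-- The graph `G(S)` of a simplicial multicomplex. -/
def complexGraph {V : Type*} (S : Multiset (Finset V)) : SimpleGraph V :=
  SimpleGraph.fromRel fun a b => ∃ F ∈ S, a ∈ F ∧ b ∈ F

/-- A simplicial `k`-multicomplex: a multiset of `(k+1)`-element sets. -/
def IsMultiComplex {V : Type*} (k : ℕ) (S : Multiset (Finset V)) : Prop :=
  ∀ F ∈ S, F.card = k + 1

/-- `F` belongs to the boundary `∂S`: it is a `k`-set contained in an odd number of
facets of `S`, counted with multiplicity. -/
def inBoundary {V : Type*} [DecidableEq V] (k : ℕ) (S : Multiset (Finset V))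
    (F : Finset V) : Prop :=
  F.card = k ∧ (S.countP fun U => F ⊆ U) % 2 = 1

instance {V : Type*} [DecidableEq V] (k : ℕ) (S : Multiset (Finset V)) (F : Finset V) :
    Decidable (inBoundary k S F) :=
  inferInstanceAs (Decidable (_ ∧ _))

/-- A simplicial `k`-cycle: a `k`-multicomplex with empty boundary. -/
def IsSimplicialCycle {V : Type*} [DecidableEq V] (k : ℕ)
    (S : Multiset (Finset V)) : Prop :=
  IsMultiComplex k S ∧ ∀ F : Finset V, ¬ inBoundary k S F

/-- A simplicial `k`-circuit: a nonempty simplicial `k`-cycle, no nonempty proper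
sub-multiset of which is a simplicial `k`-cycle. -/
def IsSimplicialCircuit {V : Type*} [DecidableEq V] (k : ℕ)
    (S : Multiset (Finset V)) : Prop :=
  IsSimplicialCycle k S ∧ S ≠ 0 ∧
    ∀ T : Multiset (Finset V), T ≤ S → T ≠ 0 → T ≠ S → ¬ IsSimplicialCycle k T

/-- A trivial simplicial `k`-circuit: two copies of a single `(k+1)`-set. -/
def IsTrivialCircuit {V : Type*} (S : Multiset (Finset V)) : Prop :=
  ∃ F : Finset V, S = {F, F}

/-- The image multiset `T* = {F* : F ∈ T}` of a multicomplex under a vertex map. -/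
def starM {V W : Type*} [DecidableEq W] (f : V → W) (T : Multiset (Finset V)) :
    Multiset (Finset W) :=
  T.map (Finset.image f)

/-- `σ` is a free simplicial involution of the multicomplex `S`. -/
def IsFreeSimplicialInvolution {V : Type*} [DecidableEq V] (S : Multiset (Finset V))
    (σ : V → V) : Prop :=
  (∀ v ∈ complexVerts S, σ (σ v) = v) ∧ starM σ S = S ∧
    ∀ F : Finset V, F.Nonempty → (∃ U ∈ S, F ⊆ U) → F.image σ ≠ F

/-- A `ℤ₂`-symmetric `k`-cycle. -/
def IsZ2SymCycle {V : Type*} [DecidableEq V] (k : ℕ) (S : Multiset (Finset V))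
    (σ : V → V) : Prop :=
  IsSimplicialCycle k S ∧ IsFreeSimplicialInvolution S σ

/-- A `ℤ₂`-irreducible `k`-cycle: a nonempty `ℤ₂`-symmetric `k`-cycle, no nonempty
proper `σ`-invariant sub-multiset of which is a simplicial `k`-cycle. -/
def IsZ2IrreducibleCycle {V : Type*} [DecidableEq V] (k : ℕ) (S : Multiset (Finset V))
    (σ : V → V) : Prop :=
  IsZ2SymCycle k S σ ∧ S ≠ 0 ∧
    ∀ T : Multiset (Finset V), T ≤ S → T ≠ 0 → T ≠ S → starM σ T = T →
      ¬ IsSimplicialCycle k T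

/-- A trivial `ℤ₂`-irreducible `k`-cycle: two vertex-disjoint trivial simplicial
`k`-circuits interchanged by `σ`. -/
def IsTrivialZ2Irreducible {V : Type*} [DecidableEq V] (S : Multiset (Finset V))
    (σ : V → V) : Prop :=
  ∃ F : Finset V, S = {F, F, F.image σ, F.image σ} ∧ Disjoint F (F.image σ)

/-- The contraction `S/uv` of the multicomplex `S` (contracting `v` onto `u`). -/
def contractC {V : Type*} [DecidableEq V] (S : Multiset (Finset V)) (u v : V) :
    Multiset (Finset V) :=
  (S.filter fun U => ¬(u ∈ U ∧ v ∈ U)).map fun U =>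
    if v ∈ U then insert u (U.erase v) else U

/-- The canonical bijection `γ` from `Ast({x,y}) ∩ Ast({x*,y*})` to `(S/xy)/x*y*`,
as a map on facets. -/
def gammaFun {V : Type*} [DecidableEq V] (x y : V) (σ : V → V) (U : Finset V) :
    Finset V :=
  if y ∈ U then insert x (U.erase y)
  else if σ y ∈ U then insert (σ x) (U.erase (σ y)) else U

/-- `Ast({x,y}) ∩ Ast({x*,y*})`: the facets of `S` containing neither `{x,y}` nor
`{x*,y*}`. -/
def doubleAst {V : Type*} [DecidableEq V] (S : Multiset (Finset V)) (x y : V)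
    (σ : V → V) : Multiset (Finset V) :=
  S.filter fun U => ¬(x ∈ U ∧ y ∈ U) ∧ ¬(σ x ∈ U ∧ σ y ∈ U)

/-- `Sᵢ† = {K ⊆ V(Sᵢ) : |K| = k+1, {x,y} ⊆ K, K - x ∈ ∂Sᵢ, K - y ∈ ∂Sᵢ}`. -/
def fogDagger {V : Type*} [DecidableEq V] (k : ℕ) (Si : Multiset (Finset V))
    (x y : V) : Finset (Finset V) :=
  (complexVerts Si).powerset.filter fun K =>
    K.card = k + 1 ∧ x ∈ K ∧ y ∈ K ∧
      inBoundary k Si (K.erase x) ∧ inBoundary k Si (K.erase y)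

/-- `Sᵢ⁺ = Sᵢ ∪ Sᵢ† ∪ (Sᵢ†)*`. -/
def fogPlus {V : Type*} [DecidableEq V] (k : ℕ) (Si : Multiset (Finset V)) (x y : V)
    (σ : V → V) : Multiset (Finset V) :=
  Si ∪ (fogDagger k Si x y).val ∪ ((fogDagger k Si x y).image (Finset.image σ)).val

/-- The boundary complex `B_k` of the `(k+1)`-dimensional crosspolytope: its facets are
the transversals of the pairs `{(i,0),(i,1)}`. -/
def crossComplex (k : ℕ) : Multiset (Finset (Fin (k + 1) × Fin 2)) :=
  (Finset.univ : Finset (Fin (k + 1) → Fin 2)).val.map fun ε =>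
    Finset.univ.image fun i => (i, ε i)

/-- The graph `G(B_k)` of the `(k+1)`-dimensional crosspolytope: all pairs of vertices
are adjacent except antipodal ones. -/
def crossGraph (k : ℕ) : SimpleGraph (Fin (k + 1) × Fin 2) :=
  SimpleGraph.fromRel fun a b => a.1 ≠ b.1

/-- The antipodal vertex pairing of `G(B_k)`. -/
def antipode (k : ℕ) : Fin (k + 1) × Fin 2 → Fin (k + 1) × Fin 2 := fun a => (a.1, a.2 + 1)

/-- A `k`-pseudomanifold: a simplicial `k`-complex in which every `(k-1)`-face lies in
exactly two facets, and which is strongly connected. -/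
def IsPseudomanifold {V : Type*} [DecidableEq V] (k : ℕ)
    (S : Multiset (Finset V)) : Prop :=
  S.Nodup ∧ (∀ F ∈ S, F.card = k + 1) ∧
    (∀ F : Finset V, F.card = k → (∃ U ∈ S, F ⊆ U) →
      (S.countP fun U => F ⊆ U) = 2) ∧
    ∀ U ∈ S, ∀ W ∈ S,
      Relation.ReflTransGen (fun A B => A ∈ S ∧ B ∈ S ∧ (A ∩ B).card = k) U W


lemma rigidityRow_mk {V : Type*} (d : ℕ) (p : V → Fin d → ℝ) (u v : V)
    (q : V → Fin d → ℝ) :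
    rigidityRow d p s(u, v) q = (p u - p v) ⬝ᵥ (q u - q v) := rfl

/-- The rigidity row as a linear functional. -/
def rowL {V : Type*} (d : ℕ) (p : V → Fin d → ℝ) (e : Sym2 V) :
    (V → Fin d → ℝ) →ₗ[ℝ] ℝ where
  toFun := fun q => rigidityRow d p e q
  map_add' := by
    intro q q'
    induction e using Sym2.ind with
    | _ u v =>
      beta_reduce
      rw [rigidityRow_mk, rigidityRow_mk, rigidityRow_mk,
        show (q + q') u - (q + q') v = (q u - q v) + (q' u - q' v) from by
          funext i; simp [Pi.add_apply]; ring,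
        dotProduct_add]
  map_smul' := by
    intro r q
    induction e using Sym2.ind with
    | _ u v =>
      beta_reduce
      simp only [RingHom.id_apply, smul_eq_mul]
      rw [rigidityRow_mk, rigidityRow_mk,
        show (r • q) u - (r • q) v = r • (q u - q v) from by
          funext i; simp [Pi.smul_apply]; ring,
        dotProduct_smul, smul_eq_mul]
open Finset

lemma aux_two_mul_choose_two (n : ℕ) : 2 * n.choose 2 = n * (n - 1) := by
  induction n with
  | zero => rfl
  | succ m ih =>
    rw [Nat.choose_succ_succ, Nat.mul_add, ih, Nat.choose_one_right]
    cases m with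
    | zero => rfl
    | succ k => simp only [Nat.succ_sub_one]; ring

lemma aux_sum_range_id (n : ℕ) : ∑ i ∈ range n, i = n.choose 2 := by
  have h1 := Finset.sum_range_id_mul_two n
  have h2 := aux_two_mul_choose_two n
  omega

lemma aux_exists_half {α : Type*} [DecidableEq α] (σ : α → α) (s : Finset α)
    (hmaps : ∀ x ∈ s, σ x ∈ s) (hinv : ∀ x ∈ s, σ (σ x) = x)
    (hfree : ∀ x ∈ s, σ x ≠ x) :
    ∃ r : Finset α, r ⊆ s ∧ 2 * r.card = s.card ∧
      (∀ x ∈ s, x ∈ r ∨ σ x ∈ r) ∧ ∀ x ∈ r, σ x ∉ r := by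
  induction s using Finset.strongInduction with
  | _ s ih =>
    rcases s.eq_empty_or_nonempty with rfl | ⟨a, ha⟩
    · exact ⟨∅, by simp⟩
    · have haσ : σ a ∈ s := hmaps a ha
      have hane : σ a ≠ a := hfree a ha
      set s' : Finset α := s \ {a, σ a} with hs'
      have hss : s' ⊂ s := by
        refine Finset.ssubset_iff_of_subset (Finset.sdiff_subset) |>.mpr ⟨a, ha, by simp [hs']⟩
      have hmem' : ∀ x, x ∈ s' ↔ x ∈ s ∧ x ≠ a ∧ x ≠ σ a := by
        intro x; simp [hs', and_assoc]
      obtain ⟨r', hr'sub, hr'card, hr'cov, hr'dis⟩ := ih s' hss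
        (fun x hx => by
          rcases (hmem' x).1 hx with ⟨hxs, hxa, hxsa⟩
          refine (hmem' (σ x)).2 ⟨hmaps x hxs, ?_, ?_⟩
          · intro h; exact hxsa (by rw [← hinv x hxs, h])
          · intro h
            have := hinv x hxs
            have : x = σ (σ x) := this.symm
            rw [h] at this
            exact hxa (by rw [this, hinv a ha]))
        (fun x hx => hinv x ((hmem' x).1 hx).1)
        (fun x hx => hfree x ((hmem' x).1 hx).1)
      refine ⟨insert a r', ?_, ?_, ?_, ?_⟩
      · intro x hx
        rcases Finset.mem_insert.1 hx with rfl | hx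
        · exact ha
        · exact (hmem' x).1 (hr'sub hx) |>.1
      · have hnotin : a ∉ r' := fun h => ((hmem' a).1 (hr'sub h)).2.1 rfl
        rw [Finset.card_insert_of_notMem hnotin]
        have hsub : ({a, σ a} : Finset α) ⊆ s := by
          intro x hx; rcases Finset.mem_insert.1 hx with rfl | hx
          · exact ha
          · rw [Finset.mem_singleton] at hx; rw [hx]; exact haσ
        have hcard2 : ({a, σ a} : Finset α).card = 2 := by
          rw [Finset.card_insert_of_notMem (by simp [Ne.symm hane]), Finset.card_singleton]
        have : s'.card = s.card - 2 := by rw [hs', Finset.card_sdiff_of_subset hsub, hcard2]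
        have h2le : 2 ≤ s.card := by
          calc 2 = ({a, σ a} : Finset α).card := hcard2.symm
          _ ≤ s.card := Finset.card_le_card hsub
        omega
      · intro x hxs
        by_cases hxa : x = a
        · left; rw [hxa]; exact Finset.mem_insert_self _ _
        by_cases hxsa : x = σ a
        · right
          rw [hxsa, hinv a ha]; exact Finset.mem_insert_self _ _
        · rcases hr'cov x ((hmem' x).2 ⟨hxs, hxa, hxsa⟩) with h | h
          · exact Or.inl (Finset.mem_insert_of_mem h)
          · exact Or.inr (Finset.mem_insert_of_mem h)
      · intro x hx
        rcases Finset.mem_insert.1 hx with rfl | hx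
        · intro h
          rcases Finset.mem_insert.1 h with h' | h'
          · exact hane h'
          · exact ((hmem' (σ x)).1 (hr'sub h')).2.2 rfl
        · intro h
          rcases Finset.mem_insert.1 h with h' | h'
          · have hxs := ((hmem' x).1 (hr'sub hx)).1
            have : x = σ a := by rw [← h', hinv x hxs]
            exact ((hmem' x).1 (hr'sub hx)).2.2 this
          · exact hr'dis x hx h'

lemma aux_card_fin_Ico (d a b : ℕ) (hb : b ≤ d) :
    Fintype.card {j : Fin d // a ≤ (j : ℕ) ∧ (j : ℕ) < b} = b - a := by
  rw [Fintype.card_subtype]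
  rw [← Nat.card_Ico a b]
  refine Finset.card_bij (fun (j : Fin d) _ => (j : ℕ)) ?_ ?_ ?_
  · intro j hj
    simp only [Finset.mem_filter] at hj
    exact Finset.mem_Ico.2 hj.2
  · intro j _ j' _ h; exact Fin.ext h
  · intro k hk
    rcases Finset.mem_Ico.1 hk with ⟨h1, h2⟩
    exact ⟨⟨k, lt_of_lt_of_le h2 hb⟩, by simp [h1, h2], rfl⟩

lemma aux_card_pairs_same (d t : ℕ) (ht : t ≤ d) :
    Fintype.card {ij : Fin d × Fin d //
        (ij.1 : ℕ) < (ij.2 : ℕ) ∧ ((ij.2 : ℕ) < t ∨ t ≤ (ij.1 : ℕ))} =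
      t.choose 2 + (d - t).choose 2 := by
  rw [Fintype.card_congr (Equiv.subtypeProdEquivSigmaSubtype
    (fun i j : Fin d => (i : ℕ) < (j : ℕ) ∧ ((j : ℕ) < t ∨ t ≤ (i : ℕ)))),
    Fintype.card_sigma]
  have hstep : ∀ i : Fin d,
      Fintype.card {j : Fin d // (i : ℕ) < (j : ℕ) ∧ ((j : ℕ) < t ∨ t ≤ (i : ℕ))} =
        if (i : ℕ) < t then t - ((i : ℕ) + 1) else d - ((i : ℕ) + 1) := by
    intro i
    by_cases hi : (i : ℕ) < t
    · rw [if_pos hi, ← aux_card_fin_Ico d ((i : ℕ) + 1) t ht]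
      apply Fintype.card_congr
      apply Equiv.subtypeEquivRight
      intro j; constructor <;> intro h <;> omega
    · rw [if_neg hi, ← aux_card_fin_Ico d ((i : ℕ) + 1) d le_rfl]
      apply Fintype.card_congr
      apply Equiv.subtypeEquivRight
      intro j
      have := j.isLt
      constructor <;> intro h <;> omega
  calc ∑ i : Fin d, Fintype.card {j : Fin d // (i : ℕ) < (j : ℕ) ∧ ((j : ℕ) < t ∨ t ≤ (i : ℕ))}
      = ∑ i : Fin d, (if (i : ℕ) < t then t - ((i : ℕ) + 1) else d - ((i : ℕ) + 1)) :=
        Finset.sum_congr rfl (fun i _ => hstep i)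
    _ = ∑ k ∈ Finset.range d, (if k < t then t - (k + 1) else d - (k + 1)) :=
        Fin.sum_univ_eq_sum_range (fun k => if k < t then t - (k + 1) else d - (k + 1)) d
    _ = t.choose 2 + (d - t).choose 2 := by
        rw [Finset.range_eq_Ico, ← Finset.sum_Ico_consecutive _ (Nat.zero_le t) ht]
        congr 1
        · rw [← Finset.range_eq_Ico]
          calc ∑ k ∈ Finset.range t, (if k < t then t - (k + 1) else d - (k + 1))
              = ∑ k ∈ Finset.range t, (t - 1 - k) := by
                apply Finset.sum_congr rfl
                intro k hk
                rw [Finset.mem_range] at hk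
                rw [if_pos hk]
                omega
            _ = ∑ k ∈ Finset.range t, k := Finset.sum_range_reflect (fun j => j) t
            _ = t.choose 2 := aux_sum_range_id t
        · rw [Finset.sum_Ico_eq_sum_range]
          calc ∑ k ∈ Finset.range (d - t), (if t + k < t then t - (t + k + 1) else d - (t + k + 1))
              = ∑ k ∈ Finset.range (d - t), ((d - t) - 1 - k) := by
                apply Finset.sum_congr rfl
                intro k hk
                rw [Finset.mem_range] at hk
                rw [if_neg (by omega)]
                omega
            _ = ∑ k ∈ Finset.range (d - t), k := Finset.sum_range_reflect (fun j => j) (d - t)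
            _ = (d - t).choose 2 := aux_sum_range_id (d - t)

lemma aux_card_pairs_diff (d t : ℕ) (ht : t ≤ d) :
    Fintype.card {ij : Fin d × Fin d //
        (ij.1 : ℕ) < (ij.2 : ℕ) ∧ ((ij.1 : ℕ) < t ∧ t ≤ (ij.2 : ℕ))} =
      t * (d - t) := by
  rw [Fintype.card_congr (Equiv.subtypeProdEquivSigmaSubtype
    (fun i j : Fin d => (i : ℕ) < (j : ℕ) ∧ ((i : ℕ) < t ∧ t ≤ (j : ℕ)))),
    Fintype.card_sigma]
  have hstep : ∀ i : Fin d,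
      Fintype.card {j : Fin d // (i : ℕ) < (j : ℕ) ∧ ((i : ℕ) < t ∧ t ≤ (j : ℕ))} =
        if (i : ℕ) < t then d - t else 0 := by
    intro i
    by_cases hi : (i : ℕ) < t
    · rw [if_pos hi, ← aux_card_fin_Ico d t d le_rfl]
      apply Fintype.card_congr
      apply Equiv.subtypeEquivRight
      intro j
      have := j.isLt
      constructor <;> intro h <;> omega
    · rw [if_neg hi]
      rw [← Nat.sub_self 1, ← aux_card_fin_Ico d 1 1 (by omega)]
      apply Fintype.card_congr
      apply Equiv.subtypeEquivRight
      intro j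
      constructor <;> intro h <;> omega
  calc ∑ i : Fin d, Fintype.card {j : Fin d // (i : ℕ) < (j : ℕ) ∧ ((i : ℕ) < t ∧ t ≤ (j : ℕ))}
      = ∑ i : Fin d, (if (i : ℕ) < t then d - t else 0) :=
        Finset.sum_congr rfl (fun i _ => hstep i)
    _ = ∑ k ∈ Finset.range d, (if k < t then d - t else 0) :=
        Fin.sum_univ_eq_sum_range (fun k => if k < t then d - t else 0) d
    _ = t * (d - t) := by
        rw [Finset.range_eq_Ico, ← Finset.sum_Ico_consecutive _ (Nat.zero_le t) ht]
        rw [← Finset.range_eq_Ico]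
        have h1 : ∑ k ∈ Finset.range t, (if k < t then d - t else 0) = t * (d - t) := by
          rw [Finset.sum_congr rfl (fun k hk => if_pos (Finset.mem_range.1 hk)),
            Finset.sum_const, Finset.card_range, smul_eq_mul]
        have h2 : ∑ k ∈ Finset.Ico t d, (if k < t then d - t else 0) = 0 := by
          apply Finset.sum_eq_zero
          intro k hk
          rw [Finset.mem_Ico] at hk
          rw [if_neg (by omega)]
        omega

lemma aux_card_fin_lt (d t : ℕ) (ht : t ≤ d) :
    Fintype.card {i : Fin d // (i : ℕ) < t} = t := by
  have h := aux_card_fin_Ico d 0 t ht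
  rw [Nat.sub_zero] at h
  calc Fintype.card {i : Fin d // (i : ℕ) < t}
      = Fintype.card {j : Fin d // 0 ≤ (j : ℕ) ∧ (j : ℕ) < t} :=
        Fintype.card_congr (Equiv.subtypeEquivRight (fun j => by simp))
    _ = t := h

lemma aux_card_fin_ge (d t : ℕ) :
    Fintype.card {i : Fin d // t ≤ (i : ℕ)} = d - t := by
  rw [← aux_card_fin_Ico d t d le_rfl]
  apply Fintype.card_congr
  apply Equiv.subtypeEquivRight
  intro j
  have := j.isLt
  constructor <;> intro h <;> omega

open Matrix in
/-- The parameter space of `ν`-symmetric trivial motions. -/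
def auxP (d : ℕ) (ε : Fin d → ℝ) (ν : ℝ) :
    Submodule ℝ (Matrix (Fin d) (Fin d) ℝ × (Fin d → ℝ)) where
  carrier := {Sc | Sc.1ᵀ = -Sc.1 ∧ (∀ i j, ε i * Sc.1 i j * ε j = ν * Sc.1 i j) ∧
    ∀ i, ε i * Sc.2 i = ν * Sc.2 i}
  add_mem' := by
    rintro a b ⟨h1, h2, h3⟩ ⟨g1, g2, g3⟩
    refine ⟨?_, ?_, ?_⟩
    · simp only [Prod.fst_add, Matrix.transpose_add, h1, g1, neg_add]
    · intro i j
      simp only [Prod.fst_add, Matrix.add_apply]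
      linear_combination h2 i j + g2 i j
    · intro i
      simp only [Prod.snd_add, Pi.add_apply]
      linear_combination h3 i + g3 i
  zero_mem' := by
    refine ⟨by simp, fun i j => by simp, fun i => by simp⟩
  smul_mem' := by
    rintro r a ⟨h1, h2, h3⟩
    refine ⟨?_, ?_, ?_⟩
    · simp only [Prod.smul_fst, Matrix.transpose_smul, h1, smul_neg]
    · intro i j
      simp only [Prod.smul_fst, Matrix.smul_apply, smul_eq_mul]
      linear_combination r * h2 i j
    · intro i
      simp only [Prod.smul_snd, Pi.smul_apply, smul_eq_mul]
      linear_combination r * h3 i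

lemma aux_finrank_P_le (d : ℕ) (ε : Fin d → ℝ) (hε : ∀ i, ε i = 1 ∨ ε i = -1)
    (ν : ℝ) (hν : ν = 1 ∨ ν = -1) :
    Module.finrank ℝ ↥(auxP d ε ν) ≤
      Fintype.card {ij : Fin d × Fin d // (ij.1 : ℕ) < (ij.2 : ℕ) ∧ ε ij.1 * ε ij.2 = ν}
        + Fintype.card {i : Fin d // ε i = ν} := by
  classical
  let ι := ({ij : Fin d × Fin d // (ij.1 : ℕ) < (ij.2 : ℕ) ∧ ε ij.1 * ε ij.2 = ν} ⊕
    {i : Fin d // ε i = ν})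
  let θ : ↥(auxP d ε ν) →ₗ[ℝ] (ι → ℝ) :=
    { toFun := fun x => Sum.elim (fun ij => x.1.1 ij.1.1 ij.1.2) (fun i => x.1.2 i.1)
      map_add' := by intro x y; funext z; cases z <;> simp
      map_smul' := by intro r x; funext z; cases z <;> simp }
  have hinj : Function.Injective θ := by
    rw [← LinearMap.ker_eq_bot, LinearMap.ker_eq_bot']
    intro x hx
    obtain ⟨hskew, hS, hc⟩ := x.2
    have hν0 : ν ≠ 0 := by rcases hν with rfl | rfl <;> norm_num
    have hupper : ∀ i j : Fin d, (i : ℕ) < (j : ℕ) → x.1.1 i j = 0 := by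
      intro i j hij
      by_cases h : ε i * ε j = ν
      · exact congrFun hx (Sum.inl ⟨(i, j), hij, h⟩)
      · have hs := hS i j
        rcases hν with rfl | rfl <;> rcases hε i with h1 | h1 <;> rcases hε j with h2 | h2 <;>
          rw [h1, h2] at h hs <;> first | linarith | (norm_num at h)
    have hmat : x.1.1 = 0 := by
      ext i j
      rcases lt_trichotomy (i : ℕ) (j : ℕ) with hlt | heq | hgt
      · simpa using hupper i j hlt
      · have hij : i = j := Fin.ext heq
        subst hij
        have := congrFun (congrFun hskew i) i
        simp only [Matrix.transpose_apply, Matrix.neg_apply] at this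
        simp only [Matrix.zero_apply]
        linarith
      · have := congrFun (congrFun hskew j) i
        simp only [Matrix.transpose_apply, Matrix.neg_apply] at this
        rw [show x.1.1 i j = -x.1.1 j i from by linarith, hupper j i hgt]
        simp
    have hvec : x.1.2 = 0 := by
      funext i
      by_cases h : ε i = ν
      · exact congrFun hx (Sum.inr ⟨i, h⟩)
      · have hs := hc i
        rcases hν with rfl | rfl <;> rcases hε i with h1 | h1 <;>
          rw [h1] at h hs <;>
          first | (simp only [Pi.zero_apply]; linarith) | (norm_num at h)
    exact Subtype.ext (Prod.ext hmat hvec)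
  calc Module.finrank ℝ ↥(auxP d ε ν) ≤ Module.finrank ℝ (ι → ℝ) :=
        LinearMap.finrank_le_finrank_of_injective hinj
    _ = Fintype.card ι := Module.finrank_pi ℝ
    _ = _ := Fintype.card_sum

set_option maxHeartbeats 1000000 in
set_option synthInstance.maxHeartbeats 200000 in
theorem aux_main {V : Type*} [Fintype V] [DecidableEq V] (d : ℕ)
    (G : SimpleGraph V) [DecidableRel G.Adj] (σ : V → V)
    (hσ2 : ∀ x, σ (σ x) = x) (hσfree : ∀ x, σ x ≠ x)
    (hσadj : ∀ u v, G.Adj u v ↔ G.Adj (σ u) (σ v)) (hσnadj : ∀ x, ¬ G.Adj x (σ x))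
    (ε : Fin d → ℝ) (hε : ∀ i, ε i = 1 ∨ ε i = -1)
    (p : V → Fin d → ℝ) (hp : ∀ x, ∀ i, p (σ x) i = ε i * p x i)
    (hrig : IsInfRigid d G Set.univ p) :
    ∀ ν : ℝ, (ν = 1 ∨ ν = -1) →
      Fintype.card V * d ≤
        2 * (Fintype.card {ij : Fin d × Fin d //
            (ij.1 : ℕ) < (ij.2 : ℕ) ∧ ε ij.1 * ε ij.2 = ν}
          + Fintype.card {i : Fin d // ε i = ν}) + G.edgeFinset.card := by
  classical
  have hε2 : ∀ i, ε i * ε i = 1 := fun i => by rcases hε i with h | h <;> rw [h] <;> norm_num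
  -- the symmetry operator τ
  let τ : (V → Fin d → ℝ) →ₗ[ℝ] (V → Fin d → ℝ) :=
    { toFun := fun q v i => ε i * q (σ v) i
      map_add' := by intro q q'; funext v i; simp only [Pi.add_apply]; ring
      map_smul' := by
        intro r q; funext v i
        simp only [Pi.smul_apply, smul_eq_mul, RingHom.id_apply]; ring }
  have hτapp : ∀ (q : V → Fin d → ℝ) (w : V) (i : Fin d), τ q w i = ε i * q (σ w) i :=
    fun _ _ _ => rfl
  have hτ2 : ∀ q, τ (τ q) = q := by
    intro q; funext w i
    rw [hτapp, hτapp, hσ2, ← mul_assoc, hε2, one_mul]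
  -- the ±1 eigenspaces of τ
  set E : ℝ → Submodule ℝ (V → Fin d → ℝ) :=
    fun ν => LinearMap.ker (τ - ν • LinearMap.id) with hE
  have hmem : ∀ (ν : ℝ) (q : V → Fin d → ℝ), q ∈ E ν ↔ τ q = ν • q := by
    intro ν q
    rw [hE, LinearMap.mem_ker, LinearMap.sub_apply, LinearMap.smul_apply,
      LinearMap.id_apply, sub_eq_zero]
  have hqσ : ∀ (ν : ℝ) (q : V → Fin d → ℝ), q ∈ E ν →
      ∀ (w : V) (i : Fin d), q (σ w) i = ν * (ε i * q w i) := by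
    intro ν q hq w i
    have h1 := congrFun (congrFun ((hmem ν q).1 hq) w) i
    rw [hτapp] at h1
    have h2 : ε i * (ε i * q (σ w) i) = ε i * ((ν • q) w i) := by rw [h1]
    rw [← mul_assoc, hε2, one_mul] at h2
    rw [h2]
    simp only [Pi.smul_apply, smul_eq_mul]
    ring
  -- dimension count: the eigenspaces have equal dimensions summing to `card V * d`
  have hdimsum : Module.finrank ℝ ↥(E 1) + Module.finrank ℝ ↥(E (-1)) =
      Fintype.card V * d := by
    have hsup : E 1 ⊔ E (-1) = ⊤ := by
      rw [eq_top_iff]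
      intro q _
      rw [Submodule.mem_sup]
      refine ⟨(1/2 : ℝ) • (q + τ q), ?_, (1/2 : ℝ) • (q - τ q), ?_, ?_⟩
      · rw [hmem, τ.map_smul, τ.map_add, hτ2, one_smul, add_comm]
      · rw [hmem, τ.map_smul, τ.map_sub, hτ2]
        module
      · module
    have hinf : E 1 ⊓ E (-1) = ⊥ := by
      rw [eq_bot_iff]
      rintro q ⟨h1, h2⟩
      rw [Submodule.mem_bot]
      rw [SetLike.mem_coe, hmem] at h1
      rw [SetLike.mem_coe, hmem] at h2
      have h3 : (2 : ℝ) • q = 0 := by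
        rw [show (2:ℝ) = 1 - (-1) from by norm_num, sub_smul, ← h1, ← h2, sub_self]
      exact (smul_eq_zero.1 h3).resolve_left (by norm_num)
    have hq := Submodule.finrank_sup_add_finrank_inf_eq (E 1) (E (-1))
    rw [hsup, hinf, finrank_top, finrank_bot, add_zero] at hq
    have h2 : Module.finrank ℝ (V → Fin d → ℝ) = Fintype.card V * d := by
      rw [(LinearEquiv.curry ℝ ℝ V (Fin d)).symm.finrank_eq, Module.finrank_pi ℝ,
        Fintype.card_prod, Fintype.card_fin]
    omega
  have hdimeq : Module.finrank ℝ ↥(E 1) = Module.finrank ℝ ↥(E (-1)) := by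
    obtain ⟨r₀, -, -, hcov₀, hdis₀⟩ := aux_exists_half σ Finset.univ
      (fun x _ => Finset.mem_univ _) (fun x _ => hσ2 x) (fun x _ => hσfree x)
    set δ : V → ℝ := fun v => if v ∈ r₀ then 1 else -1 with hδdef
    have hδ : ∀ v, δ (σ v) = -δ v := by
      intro v
      by_cases hv : v ∈ r₀
      · have hσv : σ v ∉ r₀ := hdis₀ v hv
        simp [hδdef, hv, hσv]
      · have hσv : σ v ∈ r₀ := (hcov₀ v (Finset.mem_univ v)).resolve_left hv
        simp [hδdef, hv, hσv]
    have hδ2 : ∀ v, δ v * δ v = 1 := by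
      intro v; by_cases hv : v ∈ r₀ <;> simp [hδdef, hv]
    let μ : (V → Fin d → ℝ) →ₗ[ℝ] (V → Fin d → ℝ) :=
      { toFun := fun q v i => δ v * q v i
        map_add' := by intro q q'; funext v i; simp only [Pi.add_apply]; ring
        map_smul' := by
          intro r q; funext v i
          simp only [Pi.smul_apply, smul_eq_mul, RingHom.id_apply]; ring }
    have hμapp : ∀ (q : V → Fin d → ℝ) (w : V) (i : Fin d), μ q w i = δ w * q w i :=
      fun _ _ _ => rfl
    have hμμ : ∀ q, μ (μ q) = q := by
      intro q; funext w i
      rw [hμapp, hμapp, ← mul_assoc, hδ2, one_mul]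
    have hμinj : Function.Injective μ := by
      intro a b h
      rw [← hμμ a, h, hμμ]
    have hμτ : ∀ q, τ (μ q) = -μ (τ q) := by
      intro q; funext w i
      simp only [Pi.neg_apply]
      rw [hτapp, hμapp, hμapp, hτapp, hδ, ]
      ring
    have hmap : ∀ ν : ℝ, ∀ q ∈ E ν, μ q ∈ E (-ν) := by
      intro ν q hq
      rw [hmem] at hq ⊢
      rw [hμτ, hq, μ.map_smul, neg_smul]
    have hle : ∀ ν : ℝ, Module.finrank ℝ ↥(E ν) ≤ Module.finrank ℝ ↥(E (-ν)) := by
      intro ν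
      calc Module.finrank ℝ ↥(E ν)
          = Module.finrank ℝ ↥(Submodule.map μ (E ν)) :=
            (Submodule.equivMapOfInjective μ hμinj (E ν)).finrank_eq
        _ ≤ Module.finrank ℝ ↥(E (-ν)) := by
            apply Submodule.finrank_mono
            rw [Submodule.map_le_iff_le_comap]
            intro q hq
            exact hmap ν q hq
    have h1 := hle 1
    have h2 := hle (-1)
    rw [neg_neg] at h2
    omega
  -- choose one edge from each σ-orbit of edges
  obtain ⟨r, hrsub, hrcard, hrcov, -⟩ := aux_exists_half (Sym2.map σ) G.edgeFinset
    (by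
      intro e he
      induction e using Sym2.ind with
      | _ u v =>
        rw [Sym2.map_pair_eq]
        rw [SimpleGraph.mem_edgeFinset, SimpleGraph.mem_edgeSet] at he ⊢
        exact (hσadj u v).1 he)
    (by
      intro e _
      induction e using Sym2.ind with
      | _ u v => rw [Sym2.map_pair_eq, Sym2.map_pair_eq, hσ2, hσ2])
    (by
      intro e he h
      induction e using Sym2.ind with
      | _ u v =>
        rw [SimpleGraph.mem_edgeFinset, SimpleGraph.mem_edgeSet] at he
        rw [Sym2.map_pair_eq, Sym2.eq_iff] at h
        rcases h with ⟨h1, h2⟩ | ⟨h1, h2⟩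
        · exact hσfree u h1
        · rw [← h1] at he
          exact hσnadj u he)
  -- the `ν`-part of a trivial motion
  let Φ : (Matrix (Fin d) (Fin d) ℝ × (Fin d → ℝ)) →ₗ[ℝ] (V → Fin d → ℝ) :=
    { toFun := fun Sc v => Sc.1 *ᵥ p v + Sc.2
      map_add' := by
        intro a b; funext v
        simp only [Prod.fst_add, Prod.snd_add, Matrix.add_mulVec, Pi.add_apply]
        abel
      map_smul' := by
        intro c a; funext v
        simp only [Prod.smul_fst, Prod.smul_snd, Matrix.smul_mulVec,
          Pi.smul_apply, RingHom.id_apply, smul_add] }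
  have hΦapp : ∀ (Sc : Matrix (Fin d) (Fin d) ℝ × (Fin d → ℝ)) (v : V),
      Φ Sc v = Sc.1 *ᵥ p v + Sc.2 := fun _ _ => rfl
  -- main per-sign estimate
  intro ν hν
  have hν2 : ν * ν = 1 := by rcases hν with rfl | rfl <;> norm_num
  have hν0 : ν ≠ 0 := by rcases hν with rfl | rfl <;> norm_num
  let F : ↥(E ν) →ₗ[ℝ] ({e : Sym2 V // e ∈ r} → ℝ) :=
    LinearMap.pi (fun e => (rowL d p e.1).comp (E ν).subtype)
  -- kernel elements of F are motions
  have hker : ∀ q : ↥(E ν), F q = 0 → IsMotion d G Set.univ p (q : V → Fin d → ℝ) := by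
    intro q hq u _ v _ huv
    have he : s(u, v) ∈ G.edgeFinset := by
      rw [SimpleGraph.mem_edgeFinset, SimpleGraph.mem_edgeSet]; exact huv
    have hrow : ∀ a b : V, s(a, b) ∈ r →
        (p a - p b) ⬝ᵥ ((q : V → Fin d → ℝ) a - (q : V → Fin d → ℝ) b) = 0 := by
      intro a b hab
      have := congrFun hq ⟨s(a, b), hab⟩
      simpa [F, rigidityRow_mk, rowL] using this
    rcases hrcov s(u, v) he with h | h
    · exact hrow u v h
    · rw [Sym2.map_pair_eq] at h
      have h0 := hrow (σ u) (σ v) h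
      have hcalc : (p (σ u) - p (σ v)) ⬝ᵥ
            ((q : V → Fin d → ℝ) (σ u) - (q : V → Fin d → ℝ) (σ v)) =
          ν * ((p u - p v) ⬝ᵥ ((q : V → Fin d → ℝ) u - (q : V → Fin d → ℝ) v)) := by
        show (∑ i, (p (σ u) i - p (σ v) i) *
            ((q : V → Fin d → ℝ) (σ u) i - (q : V → Fin d → ℝ) (σ v) i)) = _
        have hdot : (p u - p v) ⬝ᵥ ((q : V → Fin d → ℝ) u - (q : V → Fin d → ℝ) v)
            = ∑ i, (p u i - p v i) * ((q : V → Fin d → ℝ) u i - (q : V → Fin d → ℝ) v i) := rfl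
        rw [hdot, Finset.mul_sum]
        apply Finset.sum_congr rfl
        intro i _
        rw [hp u i, hp v i, hqσ ν (q : V → Fin d → ℝ) q.2 u i, hqσ ν (q : V → Fin d → ℝ) q.2 v i]
        linear_combination (ν * ((p u i - p v i) *
          ((q : V → Fin d → ℝ) u i - (q : V → Fin d → ℝ) v i))) * hε2 i
      rw [hcalc] at h0
      exact (mul_eq_zero.1 h0).resolve_left hν0
  -- kernel elements of F are images of ν-symmetric trivial motions
  have hkerle : Submodule.map (E ν).subtype (LinearMap.ker F) ≤
      Submodule.map Φ (auxP d ε ν) := by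
    rintro x hx
    rw [Submodule.mem_map] at hx
    obtain ⟨q, hqker, rfl⟩ := hx
    have hmot := hker q (LinearMap.mem_ker.1 hqker)
    obtain ⟨S, c, hskew, htr⟩ := hrig _ hmot
    have hskew' : ∀ i j, S j i = -S i j := by
      intro i j
      have := congrFun (congrFun hskew i) j
      simpa [Matrix.transpose_apply] using this
    refine ⟨(Matrix.of fun i j => (S i j + ν * ε i * S i j * ε j)/2,
      fun i => (c i + ν * ε i * c i)/2), ⟨?_, ?_, ?_⟩, ?_⟩
    · ext i j
      simp only [Matrix.transpose_apply, Matrix.neg_apply, Matrix.of_apply]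
      rw [hskew' j i]
      have := hε2 i
      have := hε2 j
      ring
    · intro i j
      simp only [Matrix.of_apply]
      linear_combination (ν * S i j * ε j * ε j / 2) * hε2 i
        + (ν * S i j / 2) * hε2 j - (ε i * S i j * ε j / 2) * hν2
    · intro i
      linear_combination (ν * c i / 2) * hε2 i - (ε i * c i / 2) * hν2
    · funext v
      rw [hΦapp]
      funext i
      have hq1 : ∀ w, (q : V → Fin d → ℝ) w = S *ᵥ p w + c := fun w => htr w (Set.mem_univ w)
      have e1 : (q : V → Fin d → ℝ) v i = (∑ j, S i j * p v j) + c i := by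
        rw [hq1 v]; rfl
      have e2 : (q : V → Fin d → ℝ) (σ v) i = (∑ j, S i j * (ε j * p v j)) + c i := by
        rw [hq1 (σ v)]
        simp only [Pi.add_apply]
        congr 1
        show (∑ j, S i j * p (σ v) j) = _
        exact Finset.sum_congr rfl fun j _ => by rw [hp v j]
      have e3 : (q : V → Fin d → ℝ) (σ v) i = ν * (ε i * (q : V → Fin d → ℝ) v i) :=
        hqσ ν _ q.2 v i
      show (∑ j, (Matrix.of fun i j => (S i j + ν * ε i * S i j * ε j)/2) i j * p v j)
          + (c i + ν * ε i * c i)/2 = (q : V → Fin d → ℝ) v i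
      have hsplit : (∑ j, (Matrix.of fun i j => (S i j + ν * ε i * S i j * ε j)/2) i j * p v j)
          = (∑ j, S i j * p v j) / 2 + (ν * ε i / 2) * (∑ j, S i j * (ε j * p v j)) := by
        rw [Finset.mul_sum, Finset.sum_div, ← Finset.sum_add_distrib]
        apply Finset.sum_congr rfl
        intro j _
        simp only [Matrix.of_apply]
        ring
      rw [hsplit]
      linear_combination (-1/2 : ℝ) * e1 - (ν * ε i / 2) * e2 + (ν * ε i / 2) * e3
        + ((q : V → Fin d → ℝ) v i * (ε i * ε i) / 2) * hν2
        + ((q : V → Fin d → ℝ) v i / 2) * (hε2 i)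
    -- membership conditions done
  -- rank computation
  have hrank := LinearMap.finrank_range_add_finrank_ker F
  have hrange : Module.finrank ℝ ↥(LinearMap.range F) ≤ r.card := by
    calc Module.finrank ℝ ↥(LinearMap.range F)
        ≤ Module.finrank ℝ ({e : Sym2 V // e ∈ r} → ℝ) := Submodule.finrank_le _
      _ = Fintype.card {e : Sym2 V // e ∈ r} := Module.finrank_pi ℝ
      _ = r.card := Fintype.card_coe r
  have hkerrank : Module.finrank ℝ ↥(LinearMap.ker F) ≤
      Fintype.card {ij : Fin d × Fin d // (ij.1 : ℕ) < (ij.2 : ℕ) ∧ ε ij.1 * ε ij.2 = ν}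
        + Fintype.card {i : Fin d // ε i = ν} := by
    calc Module.finrank ℝ ↥(LinearMap.ker F)
        = Module.finrank ℝ ↥(Submodule.map (E ν).subtype (LinearMap.ker F)) :=
          (Submodule.equivMapOfInjective _ (Submodule.injective_subtype _)
            (LinearMap.ker F)).finrank_eq
      _ ≤ Module.finrank ℝ ↥(Submodule.map Φ (auxP d ε ν)) := Submodule.finrank_mono hkerle
      _ ≤ Module.finrank ℝ ↥(auxP d ε ν) := Submodule.finrank_map_le Φ (auxP d ε ν)
      _ ≤ _ := aux_finrank_P_le d ε hε ν hν
  have hEν : Fintype.card V * d ≤ 2 * Module.finrank ℝ ↥(E ν) := by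
    rcases hν with rfl | rfl <;> omega
  omega

/-- Lemma `lem:symmetric_maxwell`. -/
theorem statement0 {V : Type*} [Fintype V] [DecidableEq V] (d t : ℕ) (hd : 1 ≤ d)
    (ht : t ≤ d - 1) (G : SimpleGraph V) [DecidableRel G.Adj] (σ : V → V)
    (hsym : IsZ2SymGraph G σ) (hcard : 2 * d ≤ Fintype.card V)
    (hrigid : GammaRigid d G Set.univ Set.univ σ (Itd t d)) :
    (d : ℤ) * Fintype.card V -
        2 * min (((t + 1).choose 2 : ℤ) + ((d - t).choose 2 : ℤ))
          (((d + 1).choose 2 : ℤ) - ((t + 1).choose 2 : ℤ) - ((d - t).choose 2 : ℤ)) ≤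
      (G.edgeFinset.card : ℤ) := by
  classical
  obtain ⟨p, hpsym, hrig⟩ := hrigid
  obtain ⟨hσ2, hσfree, hσadj, hσnadj⟩ := hsym
  have htd : t < d := by omega
  set ε : Fin d → ℝ := fun i => if (i : ℕ) < t then 1 else -1 with hεdef
  have hε : ∀ i, ε i = 1 ∨ ε i = -1 := by
    intro i; by_cases h : (i : ℕ) < t
    · left; simp [hεdef, h]
    · right; simp [hεdef, h]
  have hεpos : ∀ i : Fin d, (i : ℕ) < t → ε i = 1 := fun i h => by simp [hεdef, h]
  have hεneg : ∀ i : Fin d, ¬ (i : ℕ) < t → ε i = -1 := fun i h => by simp [hεdef, h]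
  have hp : ∀ x, ∀ i, p (σ x) i = ε i * p x i := by
    intro x i
    have h := congrFun (hpsym x (Set.mem_univ x)) i
    rw [h, Itd, Matrix.mulVec_diagonal]
  have key := aux_main d G σ hσ2 hσfree hσadj hσnadj ε hε p hp hrig
  -- identify the index counts
  have hprod1 : ∀ i j : Fin d, (i : ℕ) < (j : ℕ) →
      (ε i * ε j = 1 ↔ ((j : ℕ) < t ∨ t ≤ (i : ℕ))) := by
    intro i j hij
    by_cases hi : (i : ℕ) < t <;> by_cases hj : (j : ℕ) < t
    · rw [hεpos i hi, hεpos j hj]; norm_num; omega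
    · rw [hεpos i hi, hεneg j hj]; norm_num; omega
    · rw [hεneg i hi, hεpos j hj]; norm_num; omega
    · rw [hεneg i hi, hεneg j hj]; norm_num; omega
  have hprod2 : ∀ i j : Fin d, (i : ℕ) < (j : ℕ) →
      (ε i * ε j = -1 ↔ ((i : ℕ) < t ∧ t ≤ (j : ℕ))) := by
    intro i j hij
    by_cases hi : (i : ℕ) < t <;> by_cases hj : (j : ℕ) < t
    · rw [hεpos i hi, hεpos j hj]; norm_num; omega
    · rw [hεpos i hi, hεneg j hj]; norm_num; omega
    · rw [hεneg i hi, hεpos j hj]; norm_num; omega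
    · rw [hεneg i hi, hεneg j hj]; norm_num; omega
  have hc1 : Fintype.card {ij : Fin d × Fin d //
      (ij.1 : ℕ) < (ij.2 : ℕ) ∧ ε ij.1 * ε ij.2 = 1} = t.choose 2 + (d - t).choose 2 := by
    rw [← aux_card_pairs_same d t htd.le]
    exact Fintype.card_congr (Equiv.subtypeEquivRight
      (fun ij => and_congr_right fun hij => hprod1 ij.1 ij.2 hij))
  have hc2 : Fintype.card {i : Fin d // ε i = 1} = t := by
    rw [← aux_card_fin_lt d t htd.le]
    refine Fintype.card_congr (Equiv.subtypeEquivRight (fun i => ?_))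
    by_cases hi : (i : ℕ) < t
    · rw [hεpos i hi]; simp [hi]
    · rw [hεneg i hi]; norm_num; omega
  have hc3 : Fintype.card {ij : Fin d × Fin d //
      (ij.1 : ℕ) < (ij.2 : ℕ) ∧ ε ij.1 * ε ij.2 = -1} = t * (d - t) := by
    rw [← aux_card_pairs_diff d t htd.le]
    exact Fintype.card_congr (Equiv.subtypeEquivRight
      (fun ij => and_congr_right fun hij => hprod2 ij.1 ij.2 hij))
  have hc4 : Fintype.card {i : Fin d // ε i = -1} = d - t := by
    rw [← aux_card_fin_ge d t]
    refine Fintype.card_congr (Equiv.subtypeEquivRight (fun i => ?_))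
    by_cases hi : (i : ℕ) < t
    · rw [hεpos i hi]; norm_num; omega
    · rw [hεneg i hi]; simp; omega
  have k1 := key 1 (Or.inl rfl)
  rw [hc1, hc2] at k1
  have k2 := key (-1) (Or.inr rfl)
  rw [hc3, hc4] at k2
  -- arithmetic
  have hA : t.choose 2 + t = (t + 1).choose 2 := by
    rw [Nat.choose_succ_succ, Nat.choose_one_right, add_comm]
  have hsum : (t + 1).choose 2 + (d - t).choose 2 + (t * (d - t) + (d - t)) =
      (d + 1).choose 2 := by
    obtain ⟨s, rfl⟩ : ∃ s, d = t + s := ⟨d - t, by omega⟩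
    have hs : t + s - t = s := by omega
    rw [hs]
    obtain ⟨s', rfl⟩ : ∃ s', s = s' + 1 := ⟨s - 1, by omega⟩
    apply Nat.eq_of_mul_eq_mul_left (show 0 < 2 by norm_num)
    rw [Nat.mul_add, Nat.mul_add, aux_two_mul_choose_two, aux_two_mul_choose_two,
      aux_two_mul_choose_two]
    simp only [Nat.add_sub_cancel]
    ring
  have k1' : (Fintype.card V : ℤ) * d ≤
      2 * ((t.choose 2 : ℤ) + ((d - t).choose 2 : ℤ) + t) + G.edgeFinset.card := by
    exact_mod_cast k1
  have k2' : (Fintype.card V : ℤ) * d ≤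
      2 * (((t * (d - t) : ℕ) : ℤ) + ((d - t : ℕ) : ℤ)) + G.edgeFinset.card := by
    exact_mod_cast k2
  have hA' : (t.choose 2 : ℤ) + t = ((t + 1).choose 2 : ℤ) := by exact_mod_cast hA
  have hsum' : (((t + 1).choose 2 : ℕ) : ℤ) + ((d - t).choose 2 : ℤ)
      + (((t * (d - t) : ℕ) : ℤ) + ((d - t : ℕ) : ℤ)) = ((d + 1).choose 2 : ℤ) := by
    exact_mod_cast hsum
  rcases le_total (((t + 1).choose 2 : ℤ) + ((d - t).choose 2 : ℤ))
    (((d + 1).choose 2 : ℤ) - ((t + 1).choose 2 : ℤ) - ((d - t).choose 2 : ℤ)) with h | h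
  · rw [min_eq_left h]
    linarith
  · rw [min_eq_right h]
    linarith
end

section
/- Let (G,p) be a framework in ℝ^d, and let G₁ and G₂ be subgraphs of G with V(G) = V(G₁) ∪ V(G₂). Suppose that (G_i, p|_{V(G_i)}) is infinitesimally rigid for i = 1,2, and that the affine span of p(V(G₁) ∩ V(G₂)) has dimension at least d−1. Then (G,p) is infinitesimally rigid. -/
open Matrix

lemma skew_eq_zero_of_big_ker {d : ℕ} (A : Matrix (Fin d) (Fin d) ℝ) (hA : Aᵀ = -A)
    (U : Submodule ℝ (Fin d → ℝ)) (hU : d - 1 ≤ Module.finrank ℝ U)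
    (hker : ∀ x ∈ U, A *ᵥ x = 0) : A = 0 := by
  have key : ∀ w, A *ᵥ w = 0 := by
    intro w
    by_cases hw : w ∈ U
    · exact hker w hw
    · have hlt : U < U ⊔ (ℝ ∙ w) := by
        refine lt_of_le_of_ne le_sup_left ?_
        intro h
        exact hw (h ▸ Submodule.mem_sup_right (Submodule.mem_span_singleton_self w))
      have h1 : Module.finrank ℝ U < Module.finrank ℝ ↥(U ⊔ (ℝ ∙ w)) :=
        Submodule.finrank_lt_finrank_of_lt hlt
      have h2 : Module.finrank ℝ ↥(U ⊔ (ℝ ∙ w)) ≤ d := by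
        simpa using Submodule.finrank_le (U ⊔ (ℝ ∙ w))
      have htop : U ⊔ (ℝ ∙ w) = ⊤ := by
        apply Submodule.eq_top_of_finrank_eq
        simp only [Module.finrank_fin_fun]
        omega
      -- A *ᵥ w is orthogonal to everything
      have horth : ∀ x, (A *ᵥ w) ⬝ᵥ x = 0 := by
        intro x
        have hx : x ∈ U ⊔ (ℝ ∙ w) := htop ▸ Submodule.mem_top
        obtain ⟨u, hu, z, hz, rfl⟩ := Submodule.mem_sup.mp hx
        obtain ⟨c, rfl⟩ := Submodule.mem_span_singleton.mp hz
        have e1 : (A *ᵥ w) ⬝ᵥ u = 0 := by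
          rw [dotProduct_comm, Matrix.dotProduct_mulVec, ← Matrix.mulVec_transpose,
            hA, Matrix.neg_mulVec, hker u hu, neg_zero, zero_dotProduct]
        have e2 : (A *ᵥ w) ⬝ᵥ w = 0 := by
          have : (A *ᵥ w) ⬝ᵥ w = -((A *ᵥ w) ⬝ᵥ w) := by
            conv_lhs => rw [dotProduct_comm, Matrix.dotProduct_mulVec,
              ← Matrix.mulVec_transpose, hA, Matrix.neg_mulVec, neg_dotProduct]
          linarith
        rw [dotProduct_add, e1, dotProduct_smul, e2, zero_add, smul_zero]
      have := horth (A *ᵥ w)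
      exact (dotProduct_self_eq_zero).mp this
  ext i j
  have := congrFun (key (Pi.single j 1)) i
  simpa [Matrix.mulVec_single] using this

/-- Gluing theorem for frameworks. -/
theorem statement1 {V : Type*} [Fintype V] [DecidableEq V] (d : ℕ) (G : SimpleGraph V)
    (p : V → Fin d → ℝ) (H₁ H₂ : G.Subgraph) (hcover : H₁.verts ∪ H₂.verts = Set.univ)
    (h₁ : IsInfRigid d H₁.spanningCoe H₁.verts p)
    (h₂ : IsInfRigid d H₂.spanningCoe H₂.verts p)
    (hne : (p '' (H₁.verts ∩ H₂.verts)).Nonempty)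
    (hspan : d - 1 ≤
      Module.finrank ℝ (affineSpan ℝ (p '' (H₁.verts ∩ H₂.verts))).direction) :
    IsInfRigid d G Set.univ p := by
  intro q hq
  have m1 : IsMotion d H₁.spanningCoe H₁.verts p q := fun u _ v _ h =>
    hq u trivial v trivial (H₁.adj_sub h)
  have m2 : IsMotion d H₂.spanningCoe H₂.verts p q := fun u _ v _ h =>
    hq u trivial v trivial (H₂.adj_sub h)
  obtain ⟨S₁, c₁, hS₁, hq₁⟩ := h₁ q m1
  obtain ⟨S₂, c₂, hS₂, hq₂⟩ := h₂ q m2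
  set A : Matrix (Fin d) (Fin d) ℝ := S₁ - S₂ with hA_def
  have hAskew : Aᵀ = -A := by
    rw [hA_def, Matrix.transpose_sub, hS₁, hS₂]
    abel
  -- On the intersection, A *ᵥ p u = c₂ - c₁
  have hkeyv : ∀ u ∈ H₁.verts ∩ H₂.verts, A *ᵥ p u = c₂ - c₁ := by
    intro u hu
    have e1 := hq₁ u hu.1
    have e2 := hq₂ u hu.2
    have : S₁ *ᵥ p u + c₁ = S₂ *ᵥ p u + c₂ := by rw [← e1, ← e2]
    rw [hA_def, Matrix.sub_mulVec]
    funext i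
    have := congrFun this i
    simp only [Pi.add_apply, Pi.sub_apply] at this ⊢
    linarith
  have hkey : ∀ x ∈ p '' (H₁.verts ∩ H₂.verts), A *ᵥ x = c₂ - c₁ := by
    rintro x ⟨u, hu, rfl⟩
    exact hkeyv u hu
  -- A vanishes on the vector span of the intersection image
  set U : Submodule ℝ (Fin d → ℝ) := vectorSpan ℝ (p '' (H₁.verts ∩ H₂.verts)) with hU_def
  have hUle : U ≤ LinearMap.ker (Matrix.mulVecLin A) := by
    rw [hU_def, vectorSpan_def]
    apply Submodule.span_le.mpr
    rintro x ⟨a, ha, b, hb, rfl⟩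
    simp only [SetLike.mem_coe, LinearMap.mem_ker, Matrix.mulVecLin_apply, vsub_eq_sub]
    rw [Matrix.mulVec_sub, hkey a ha, hkey b hb, sub_self]
  have hUrank : d - 1 ≤ Module.finrank ℝ U := by
    rw [hU_def, ← direction_affineSpan]
    exact hspan
  have hAzero : A = 0 := skew_eq_zero_of_big_ker A hAskew U hUrank
    (fun x hx => by simpa using hUle hx)
  obtain ⟨x₀, u₀, hu₀, hx₀⟩ := hne
  have hczero : c₂ - c₁ = 0 := by
    rw [← hkeyv u₀ hu₀, hAzero, Matrix.zero_mulVec]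
  have hc : c₂ = c₁ := by
    funext i; have := congrFun hczero i
    simp only [Pi.sub_apply, Pi.zero_apply] at this; linarith
  have hS : S₂ = S₁ := by
    have : S₁ - S₂ = 0 := hAzero
    ext i j
    have := congrFun (congrFun this i) j
    simp only [Matrix.sub_apply, Matrix.zero_apply] at this
    linarith
  refine ⟨S₁, c₁, hS₁, fun u _ => ?_⟩
  have hu : u ∈ H₁.verts ∪ H₂.verts := by rw [hcover]; trivial
  rcases hu with hu | hu
  · exact hq₁ u hu
  · rw [hq₂ u hu, hc, hS]
end

section
/- Let 0 ≤ t ≤ d−1 and let γ = I_{t,d}. Suppose P is a generic set of n ≥ 1 points in ℝ^d. Then the affine span of P ∪ γ(P) has dimension exactly min{n, d−t} + min{n−1, t}. -/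
open Matrix

section StatementTwoAux
open Function

private lemma aux_det_ne_zero {n d r : ℕ} {x : Fin n × Fin d → ℝ}
    (hx : AlgebraicIndependent ℚ x)
    (M : Matrix (Fin r) (Fin r) (MvPolynomial (Fin n × Fin d) ℚ))
    (φ : Fin n × Fin d → ℚ) (h1 : M.map (MvPolynomial.eval φ) = 1) :
    (M.map (MvPolynomial.aeval x)).det ≠ 0 := by
  have hMd : M.det ≠ 0 := by
    intro h
    have h2 := (MvPolynomial.eval φ).map_det M
    rw [h, map_zero, RingHom.mapMatrix_apply, h1, Matrix.det_one] at h2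
    exact zero_ne_one h2
  have h3 := ((MvPolynomial.aeval x : MvPolynomial (Fin n × Fin d) ℚ →ₐ[ℚ] ℝ) :
      MvPolynomial (Fin n × Fin d) ℚ →+* ℝ).map_det M
  intro h
  apply hMd
  apply hx
  rw [map_zero]
  rw [show ((MvPolynomial.aeval x : MvPolynomial (Fin n × Fin d) ℚ →ₐ[ℚ] ℝ)) M.det
      = ((MvPolynomial.aeval x : MvPolynomial (Fin n × Fin d) ℚ →ₐ[ℚ] ℝ) :
        MvPolynomial (Fin n × Fin d) ℚ →+* ℝ) M.det from rfl, h3,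
    RingHom.mapMatrix_apply]
  exact h

private lemma det_raw {n d r : ℕ} {x : Fin n × Fin d → ℝ}
    (hx : AlgebraicIndependent ℚ x)
    (f : Fin r → Fin n) (g : Fin r → Fin d)
    (hf : Function.Injective f) (hg : Function.Injective g) :
    (Matrix.of fun i j : Fin r => x (f i, g j)).det ≠ 0 := by
  classical
  have key := aux_det_ne_zero hx
    (Matrix.of fun i j : Fin r => MvPolynomial.X (f i, g j))
    (fun ab => if ∃ k, f k = ab.1 ∧ g k = ab.2 then 1 else 0) ?_
  · convert key using 2
    ext i j
    simp [Matrix.map_apply]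
  · ext i j
    have hiff : (∃ k, f k = f i ∧ g k = g j) ↔ i = j := by
      constructor
      · rintro ⟨k, h1, h2⟩
        exact hg ((hf h1) ▸ h2)
      · rintro rfl; exact ⟨i, rfl, rfl⟩
    simp only [Matrix.map_apply, Matrix.of_apply, MvPolynomial.eval_X, Matrix.one_apply]
    simp [hiff]

private lemma det_diff {n d r : ℕ} {x : Fin n × Fin d → ℝ}
    (hx : AlgebraicIndependent ℚ x)
    (f : Fin r → Fin n) (g : Fin r → Fin d) (i0 : Fin n)
    (hf : Function.Injective f) (hg : Function.Injective g) (hi0 : ∀ k, f k ≠ i0) :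
    (Matrix.of fun i j : Fin r => x (f i, g j) - x (i0, g j)).det ≠ 0 := by
  classical
  have key := aux_det_ne_zero hx
    (Matrix.of fun i j : Fin r => MvPolynomial.X (f i, g j) - MvPolynomial.X (i0, g j))
    (fun ab => if ∃ k, f k = ab.1 ∧ g k = ab.2 then 1 else 0) ?_
  · convert key using 2
    ext i j
    simp [Matrix.map_apply]
  · ext i j
    have hiff : (∃ k, f k = f i ∧ g k = g j) ↔ i = j := by
      constructor
      · rintro ⟨k, h1, h2⟩
        exact hg ((hf h1) ▸ h2)
      · rintro rfl; exact ⟨i, rfl, rfl⟩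
    have h0 : ¬ (∃ k, f k = i0 ∧ g k = g j) := by
      rintro ⟨k, h1, _⟩; exact hi0 k h1
    simp only [Matrix.map_apply, Matrix.of_apply, map_sub, MvPolynomial.eval_X,
      Matrix.one_apply]
    simp [hiff, h0]

private lemma li_of_det {m d : ℕ} (v : Fin m → Fin d → ℝ) (g : Fin m → Fin d)
    (h : (Matrix.of fun i j : Fin m => v i (g j)).det ≠ 0) :
    LinearIndependent ℝ v := by
  have h1 : LinearIndependent ℝ (fun i => (Matrix.of fun i j : Fin m => v i (g j)) i) :=
    Matrix.linearIndependent_rows_iff_isUnit.2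
      ((Matrix.isUnit_iff_isUnit_det _).2 (isUnit_iff_ne_zero.2 h))
  exact LinearIndependent.of_comp (LinearMap.funLeft ℝ ℝ g) h1

private lemma finrank_ker_funLeft {d r : ℕ} (g : Fin r → Fin d) (hg : Injective g) :
    Module.finrank ℝ (LinearMap.ker (LinearMap.funLeft ℝ ℝ g)) = d - r := by
  have h := LinearMap.finrank_range_add_finrank_ker (LinearMap.funLeft ℝ ℝ g)
  rw [LinearMap.range_eq_top.2 (LinearMap.funLeft_surjective_of_injective ℝ ℝ g hg),
    finrank_top] at h
  rw [Module.finrank_fin_fun, Module.finrank_fin_fun] at h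
  omega


/-- Affine span of a generic symmetric point set. -/
theorem statement2 (d t n : ℕ) (hd : 1 ≤ d) (ht : t ≤ d - 1) (hn : 1 ≤ n)
    (p : Fin n → Fin d → ℝ)
    (hgen : AlgebraicIndependent ℚ fun ij : Fin n × Fin d => p ij.1 ij.2) :
    Module.finrank ℝ
        (affineSpan ℝ (Set.range p ∪ (fun w => Itd t d *ᵥ w) '' Set.range p)).direction =
      min n (d - t) + min (n - 1) t := by
  classical
  have htd : t < d := by omega
  set i0 : Fin n := ⟨0, hn⟩ with hi0def
  obtain ⟨uvec, huvec⟩ : ∃ u : Fin n → Fin d → ℝ,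
      ∀ i j, u i j = if (j : ℕ) < t then p i j - p i0 j else 0 := ⟨_, fun _ _ => rfl⟩
  obtain ⟨wvec, hwvec⟩ : ∃ w : Fin n → Fin d → ℝ,
      ∀ i j, w i j = if (j : ℕ) < t then 0 else p i j := ⟨_, fun _ _ => rfl⟩
  set A : Submodule ℝ (Fin d → ℝ) := Submodule.span ℝ (Set.range uvec) with hAdef
  set B : Submodule ℝ (Fin d → ℝ) := Submodule.span ℝ (Set.range wvec) with hBdef
  have hγ : ∀ (y : Fin d → ℝ) (j : Fin d),
      (Itd t d *ᵥ y) j = if (j : ℕ) < t then y j else - y j := by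
    intro y j
    simp only [Itd, Matrix.mulVec_diagonal]
    split_ifs <;> ring
  have hmem : p i0 ∈ (Set.range p ∪ (fun w => Itd t d *ᵥ w) '' Set.range p) :=
    Set.mem_union_left _ ⟨i0, rfl⟩
  rw [direction_affineSpan, vectorSpan_eq_span_vsub_set_right ℝ hmem]
  set V : Submodule ℝ (Fin d → ℝ) := Submodule.span ℝ
    ((· -ᵥ p i0) '' (Set.range p ∪ (fun w => Itd t d *ᵥ w) '' Set.range p)) with hVdef
  -- membership facts
  have hw0 : wvec i0 ∈ V := by
    have : wvec i0 = (-(2⁻¹ : ℝ)) • ((Itd t d *ᵥ p i0) -ᵥ p i0) := by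
      funext j
      simp only [hwvec, vsub_eq_sub, Pi.smul_apply, Pi.sub_apply, hγ, smul_eq_mul]
      split_ifs <;> ring
    rw [this]
    exact Submodule.smul_mem _ _ (Submodule.subset_span
      ⟨Itd t d *ᵥ p i0, Set.mem_union_right _ ⟨p i0, ⟨i0, rfl⟩, rfl⟩, rfl⟩)
  have hpm : ∀ i : Fin n, (p i -ᵥ p i0) ∈ V := fun i =>
    Submodule.subset_span ⟨p i, Set.mem_union_left _ ⟨i, rfl⟩, rfl⟩
  have hgm : ∀ i : Fin n, ((Itd t d *ᵥ p i) -ᵥ p i0) ∈ V := fun i =>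
    Submodule.subset_span ⟨Itd t d *ᵥ p i, Set.mem_union_right _ ⟨p i, ⟨i, rfl⟩, rfl⟩, rfl⟩
  have hu : ∀ i, uvec i ∈ V := by
    intro i
    have : uvec i = (2⁻¹ : ℝ) • ((p i -ᵥ p i0) + ((Itd t d *ᵥ p i) -ᵥ p i0)) + wvec i0 := by
      funext j
      simp only [huvec, hwvec, vsub_eq_sub, Pi.add_apply, Pi.smul_apply, Pi.sub_apply, hγ,
        smul_eq_mul]
      split_ifs <;> ring
    rw [this]
    exact add_mem (Submodule.smul_mem _ _ (add_mem (hpm i) (hgm i))) hw0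
  have hwv : ∀ i, wvec i ∈ V := by
    intro i
    have : wvec i = (p i -ᵥ p i0) - uvec i + wvec i0 := by
      funext j
      simp only [huvec, hwvec, vsub_eq_sub, Pi.add_apply, Pi.sub_apply]
      split_ifs <;> ring
    rw [this]
    exact add_mem (sub_mem (hpm i) (hu i)) hw0
  have hVAB : V = A ⊔ B := by
    apply le_antisymm
    · rw [hVdef, Submodule.span_le]
      rintro _ ⟨q, hq, rfl⟩
      rcases hq with ⟨i, rfl⟩ | ⟨_, ⟨i, rfl⟩, rfl⟩
      · have : p i -ᵥ p i0 = uvec i + (wvec i - wvec i0) := by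
          funext j
          simp only [huvec, hwvec, vsub_eq_sub, Pi.add_apply, Pi.sub_apply]
          split_ifs <;> ring
        simp only [SetLike.mem_coe]
        show p i -ᵥ p i0 ∈ A ⊔ B
        rw [this]
        exact add_mem (Submodule.mem_sup_left (Submodule.subset_span ⟨i, rfl⟩))
          (sub_mem (Submodule.mem_sup_right (Submodule.subset_span ⟨i, rfl⟩))
            (Submodule.mem_sup_right (Submodule.subset_span ⟨i0, rfl⟩)))
      · have : (Itd t d *ᵥ p i) -ᵥ p i0 = uvec i - wvec i - wvec i0 := by
          funext j
          simp only [huvec, hwvec, vsub_eq_sub, Pi.sub_apply, hγ]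
          split_ifs <;> ring
        simp only [SetLike.mem_coe]
        show (Itd t d *ᵥ p i) -ᵥ p i0 ∈ A ⊔ B
        rw [this]
        exact sub_mem (sub_mem (Submodule.mem_sup_left (Submodule.subset_span ⟨i, rfl⟩))
            (Submodule.mem_sup_right (Submodule.subset_span ⟨i, rfl⟩)))
          (Submodule.mem_sup_right (Submodule.subset_span ⟨i0, rfl⟩))
    · exact sup_le (Submodule.span_le.2 (by rintro _ ⟨i, rfl⟩; exact hu i))
        (Submodule.span_le.2 (by rintro _ ⟨i, rfl⟩; exact hwv i))
  -- coordinate embeddings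
  obtain ⟨gLow, hgLowv⟩ : ∃ g : Fin t → Fin d, ∀ j, (g j : ℕ) = j :=
    ⟨fun j => ⟨j, by have := j.isLt; omega⟩, fun _ => rfl⟩
  obtain ⟨gHigh, hgHighv⟩ : ∃ g : Fin (d - t) → Fin d, ∀ j, (g j : ℕ) = t + j :=
    ⟨fun j => ⟨t + j, by have := j.isLt; omega⟩, fun _ => rfl⟩
  have hgLowInj : Injective gLow := fun a b hab => by
    have := congrArg Fin.val hab; rw [hgLowv, hgLowv] at this; exact Fin.ext this
  have hgHighInj : Injective gHigh := fun a b hab => by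
    have := congrArg Fin.val hab; rw [hgHighv, hgHighv] at this; exact Fin.ext (by omega)
  have hA_ker : A ≤ LinearMap.ker (LinearMap.funLeft ℝ ℝ gHigh) := by
    rw [hAdef, Submodule.span_le]
    rintro _ ⟨i, rfl⟩
    have hz : ∀ j, uvec i (gHigh j) = 0 := fun j => by
      rw [huvec, if_neg (by rw [hgHighv]; omega)]
    exact LinearMap.mem_ker.2 (funext fun j => hz j)
  have hB_ker : B ≤ LinearMap.ker (LinearMap.funLeft ℝ ℝ gLow) := by
    rw [hBdef, Submodule.span_le]
    rintro _ ⟨i, rfl⟩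
    have hz : ∀ j, wvec i (gLow j) = 0 := fun j => by
      rw [hwvec, if_pos (by rw [hgLowv]; exact j.isLt)]
    exact LinearMap.mem_ker.2 (funext fun j => hz j)
  have hAB_bot : A ⊓ B = ⊥ := by
    rw [eq_bot_iff]
    rintro x ⟨hxA, hxB⟩
    have h1 := LinearMap.mem_ker.1 (hA_ker hxA)
    have h2 := LinearMap.mem_ker.1 (hB_ker hxB)
    have hx0 : x = 0 := by
      funext j
      by_cases hj : (j : ℕ) < t
      · have h3 := congrFun h2 ⟨j, hj⟩
        have h4 : gLow ⟨j, hj⟩ = j := Fin.ext (by rw [hgLowv])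
        rw [show ((LinearMap.funLeft ℝ ℝ gLow) x) ⟨j, hj⟩ = x (gLow ⟨j, hj⟩) from rfl,
          h4] at h3
        exact h3
      · have hj2 : (j : ℕ) - t < d - t := by have := j.isLt; omega
        have h3 := congrFun h1 ⟨(j : ℕ) - t, hj2⟩
        have h4 : gHigh ⟨(j : ℕ) - t, hj2⟩ = j := Fin.ext (by rw [hgHighv]; simp; omega)
        rw [show ((LinearMap.funLeft ℝ ℝ gHigh) x) ⟨(j : ℕ) - t, hj2⟩
            = x (gHigh ⟨(j : ℕ) - t, hj2⟩) from rfl, h4] at h3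
        exact h3
    simp [hx0]
  -- rank of B
  have hBrank : Module.finrank ℝ B = min n (d - t) := by
    rcases le_or_gt n (d - t) with hc | hc
    · obtain ⟨g, hgv⟩ : ∃ g : Fin n → Fin d, ∀ j, (g j : ℕ) = t + j :=
        ⟨fun j => ⟨t + j, by have := j.isLt; omega⟩, fun _ => rfl⟩
      have hginj : Injective g := fun a b hab => by
        have := congrArg Fin.val hab; rw [hgv, hgv] at this; exact Fin.ext (by omega)
      have hdet := det_raw hgen id g injective_id hginj
      have hdet' : (Matrix.of fun i j : Fin n => wvec i (g j)).det ≠ 0 := by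
        convert hdet using 2
        ext i j
        simp only [Matrix.of_apply]
        rw [hwvec, if_neg (by rw [hgv]; omega)]
        rfl
      have hli : LinearIndependent ℝ wvec := li_of_det wvec g hdet'
      rw [hBdef, finrank_span_eq_card hli, Fintype.card_fin]
      omega
    · obtain ⟨f, hfv⟩ : ∃ f : Fin (d - t) → Fin n, ∀ i, (f i : ℕ) = i :=
        ⟨fun i => ⟨i, by have := i.isLt; omega⟩, fun _ => rfl⟩
      have hfinj : Injective f := fun a b hab => by
        have := congrArg Fin.val hab; rw [hfv, hfv] at this; exact Fin.ext this
      have hdet := det_raw hgen f gHigh hfinj hgHighInj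
      have hdet' : (Matrix.of fun i j : Fin (d - t) => wvec (f i) (gHigh j)).det ≠ 0 := by
        convert hdet using 2
        ext i j
        simp only [Matrix.of_apply]
        rw [hwvec, if_neg (by rw [hgHighv]; omega)]
      have hli : LinearIndependent ℝ (fun i => wvec (f i)) := li_of_det _ gHigh hdet'
      have hsub : Submodule.span ℝ (Set.range fun i => wvec (f i)) ≤ B := by
        rw [hBdef]
        exact Submodule.span_mono (by rintro _ ⟨i, rfl⟩; exact ⟨f i, rfl⟩)
      have hlow := Submodule.finrank_mono hsub
      rw [finrank_span_eq_card hli, Fintype.card_fin] at hlow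
      have hup := Submodule.finrank_mono hB_ker
      rw [finrank_ker_funLeft gLow hgLowInj] at hup
      omega
  -- rank of A
  have hArank : Module.finrank ℝ A = min (n - 1) t := by
    rcases le_or_gt (n - 1) t with hc | hc
    · obtain ⟨f, hfv⟩ : ∃ f : Fin (n - 1) → Fin n, ∀ i, (f i : ℕ) = i + 1 :=
        ⟨fun i => ⟨i + 1, by have := i.isLt; omega⟩, fun _ => rfl⟩
      have hfinj : Injective f := fun a b hab => by
        have := congrArg Fin.val hab; rw [hfv, hfv] at this; exact Fin.ext (by omega)
      obtain ⟨g, hgv⟩ : ∃ g : Fin (n - 1) → Fin d, ∀ j, (g j : ℕ) = j :=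
        ⟨fun j => ⟨j, by have := j.isLt; omega⟩, fun _ => rfl⟩
      have hginj : Injective g := fun a b hab => by
        have := congrArg Fin.val hab; rw [hgv, hgv] at this; exact Fin.ext this
      have hf0 : ∀ k, f k ≠ i0 := fun k hk => by
        have := congrArg Fin.val hk; rw [hfv] at this; simp [hi0def] at this
      have hdet := det_diff hgen f g i0 hfinj hginj hf0
      have hdet' : (Matrix.of fun i j : Fin (n - 1) => uvec (f i) (g j)).det ≠ 0 := by
        convert hdet using 2
        ext i j
        simp only [Matrix.of_apply]
        rw [huvec, if_pos (by rw [hgv]; have := j.isLt; omega)]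
      have hli : LinearIndependent ℝ (fun i => uvec (f i)) := li_of_det _ g hdet'
      have hA_eq : A = Submodule.span ℝ (Set.range fun i => uvec (f i)) := by
        apply le_antisymm
        · rw [hAdef, Submodule.span_le]
          rintro _ ⟨i, rfl⟩
          by_cases hi : i = i0
          · have : uvec i = 0 := by
              funext j; rw [huvec, hi]; split_ifs <;> simp
            rw [this]
            exact zero_mem _
          · have hi' : (i : ℕ) ≠ 0 := fun hc0 => hi (Fin.ext (by rw [hc0, hi0def]))
            have hlt : (i : ℕ) - 1 < n - 1 := by have := i.isLt; omega
            have he : f ⟨(i : ℕ) - 1, hlt⟩ = i := by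
              refine Fin.ext ?_
              rw [hfv]
              show (i : ℕ) - 1 + 1 = (i : ℕ)
              omega
            exact Submodule.subset_span ⟨⟨(i : ℕ) - 1, hlt⟩, by
              show uvec (f ⟨(i : ℕ) - 1, hlt⟩) = uvec i
              rw [he]⟩
        · rw [hAdef]
          exact Submodule.span_mono (by rintro _ ⟨i, rfl⟩; exact ⟨f i, rfl⟩)
      rw [hA_eq, finrank_span_eq_card hli, Fintype.card_fin]
      omega
    · obtain ⟨f, hfv⟩ : ∃ f : Fin t → Fin n, ∀ i, (f i : ℕ) = i + 1 :=
        ⟨fun i => ⟨i + 1, by have := i.isLt; omega⟩, fun _ => rfl⟩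
      have hfinj : Injective f := fun a b hab => by
        have := congrArg Fin.val hab; rw [hfv, hfv] at this; exact Fin.ext (by omega)
      have hf0 : ∀ k, f k ≠ i0 := fun k hk => by
        have := congrArg Fin.val hk; rw [hfv] at this; simp [hi0def] at this
      have hdet := det_diff hgen f gLow i0 hfinj hgLowInj hf0
      have hdet' : (Matrix.of fun i j : Fin t => uvec (f i) (gLow j)).det ≠ 0 := by
        convert hdet using 2
        ext i j
        simp only [Matrix.of_apply]
        rw [huvec, if_pos (by rw [hgLowv]; exact j.isLt)]
      have hli : LinearIndependent ℝ (fun i => uvec (f i)) := li_of_det _ gLow hdet'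
      have hsub : Submodule.span ℝ (Set.range fun i => uvec (f i)) ≤ A := by
        rw [hAdef]
        exact Submodule.span_mono (by rintro _ ⟨i, rfl⟩; exact ⟨f i, rfl⟩)
      have hlow := Submodule.finrank_mono hsub
      rw [finrank_span_eq_card hli, Fintype.card_fin] at hlow
      have hup := Submodule.finrank_mono hA_ker
      rw [finrank_ker_funLeft gHigh hgHighInj] at hup
      omega
  -- conclusion
  have hsum := Submodule.finrank_sup_add_finrank_inf_eq A B
  rw [hAB_bot, finrank_bot] at hsum
  have : Module.finrank ℝ V = Module.finrank ℝ (A ⊔ B : Submodule ℝ (Fin d → ℝ)) := by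
    rw [hVAB]
  rw [this]
  omega

end StatementTwoAux
end

section
/- Let k ≥ 2, 0 ≤ t ≤ k, and Γ = Γ_{t,k+1}. Let G(B_k) be the graph of the (k+1)-dimensional crosspolytope with its antipodal non-adjacent vertex pairing * defined on all of V(B_k). If it is not the case that k = 2 and t = 1 (i.e. unless Γ is a rotation group of order two in ℝ³), then (G(B_k),*) is Γ-rigid in ℝ^{k+1}. -/
open Matrix

namespace Statement7Aux

/-- coefficient of `Pi.single x.1` in the realization -/
noncomputable def sg (t : ℕ) {n : ℕ} (i : Fin n) (e : Fin 2) : ℝ :=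
  if (i : ℕ) < t then 1 else if e = 0 then 1 else -1

/-- coefficient of `Pi.single (Fin.last k)` in the realization -/
noncomputable def ck (t : ℕ) {n : ℕ} (i : Fin n) (e : Fin 2) : ℝ :=
  if (i : ℕ) < t then (if e = 0 then 1 else -1) else 0

/-- the symmetric realization of the crosspolytope graph -/
noncomputable def ppt (k t : ℕ) : Fin (k + 1) × Fin 2 → Fin (k + 1) → ℝ :=
  fun x => Pi.single x.1 (sg t x.1 x.2) + Pi.single (Fin.last k) (ck t x.1 x.2)

lemma sg_P {t n : ℕ} {i : Fin n} (h : (i : ℕ) < t) (e : Fin 2) : sg t i e = 1 := by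
  rw [sg, if_pos h]

lemma sg_Q0 {t n : ℕ} {i : Fin n} (h : ¬ (i : ℕ) < t) {e : Fin 2} (he : e = 0) :
    sg t i e = 1 := by rw [sg, if_neg h, if_pos he]

lemma sg_Q1 {t n : ℕ} {i : Fin n} (h : ¬ (i : ℕ) < t) {e : Fin 2} (he : e ≠ 0) :
    sg t i e = -1 := by rw [sg, if_neg h, if_neg he]

lemma ck_P0 {t n : ℕ} {i : Fin n} (h : (i : ℕ) < t) {e : Fin 2} (he : e = 0) :
    ck t i e = 1 := by rw [ck, if_pos h, if_pos he]

lemma ck_P1 {t n : ℕ} {i : Fin n} (h : (i : ℕ) < t) {e : Fin 2} (he : e ≠ 0) :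
    ck t i e = -1 := by rw [ck, if_pos h, if_neg he]

lemma ck_Q {t n : ℕ} {i : Fin n} (h : ¬ (i : ℕ) < t) (e : Fin 2) : ck t i e = 0 := by
  rw [ck, if_neg h]

/-- "average" of a motion at the antipodal pair `i`, coordinate `l` -/
noncomputable def mm {k : ℕ} (q : Fin (k + 1) × Fin 2 → Fin (k + 1) → ℝ)
    (i l : Fin (k + 1)) : ℝ := (q (i, 0) l + q (i, 1) l) / 2

/-- "half-difference" of a motion at the antipodal pair `i`, coordinate `l` -/
noncomputable def ss {k : ℕ} (q : Fin (k + 1) × Fin 2 → Fin (k + 1) → ℝ)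
    (i l : Fin (k + 1)) : ℝ := (q (i, 0) l - q (i, 1) l) / 2

/-- the scalar form of the infinitesimal motion equations -/
def Master (k t : ℕ) (q : Fin (k + 1) × Fin 2 → Fin (k + 1) → ℝ) : Prop :=
  ∀ i j : Fin (k + 1), i ≠ j → ∀ e f : Fin 2,
    sg t i e * (q (i, e) i - q (j, f) i) - sg t j f * (q (i, e) j - q (j, f) j)
      + (ck t i e - ck t j f) * (q (i, e) (Fin.last k) - q (j, f) (Fin.last k)) = 0

lemma qpack {k t : ℕ} {q : Fin (k + 1) × Fin 2 → Fin (k + 1) → ℝ} (hM : Master k t q)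
    {a b : Fin (k + 1)} (ha : ¬ (a : ℕ) < t) (hb : ¬ (b : ℕ) < t) (hab : a ≠ b) :
    ss q b a = - ss q a b ∧ ss q a a + ss q b b = 0 ∧
      mm q a b = mm q b b ∧ mm q b a = mm q a a := by
  have E00 := hM a b hab 0 0
  have E01 := hM a b hab 0 1
  have E10 := hM a b hab 1 0
  have E11 := hM a b hab 1 1
  rw [sg_Q0 ha rfl, sg_Q0 hb rfl, ck_Q ha, ck_Q hb] at E00
  rw [sg_Q0 ha rfl, sg_Q1 hb (by decide), ck_Q ha, ck_Q hb] at E01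
  rw [sg_Q1 ha (by decide), sg_Q0 hb rfl, ck_Q ha, ck_Q hb] at E10
  rw [sg_Q1 ha (by decide), sg_Q1 hb (by decide), ck_Q ha, ck_Q hb] at E11
  refine ⟨?_, ?_, ?_, ?_⟩ <;> simp only [mm, ss] <;> linarith

lemma pqpack {k t : ℕ} {q : Fin (k + 1) × Fin 2 → Fin (k + 1) → ℝ} (hM : Master k t q)
    {i j : Fin (k + 1)} (hi : (i : ℕ) < t) (hj : ¬ (j : ℕ) < t) :
    ss q i j + ss q j (Fin.last k) = 0 ∧
    mm q i i - mm q j i + ss q j j + ss q i (Fin.last k) = 0 ∧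
    ss q j i = mm q j j - mm q i j ∧
    ss q i i = mm q j (Fin.last k) - mm q i (Fin.last k) := by
  have hij : i ≠ j := fun h => hj (h ▸ hi)
  have E00 := hM i j hij 0 0
  have E01 := hM i j hij 0 1
  have E10 := hM i j hij 1 0
  have E11 := hM i j hij 1 1
  rw [sg_P hi, sg_Q0 hj rfl, ck_P0 hi rfl, ck_Q hj] at E00
  rw [sg_P hi, sg_Q1 hj (by decide), ck_P0 hi rfl, ck_Q hj] at E01
  rw [sg_P hi, sg_Q0 hj rfl, ck_P1 hi (by decide), ck_Q hj] at E10
  rw [sg_P hi, sg_Q1 hj (by decide), ck_P1 hi (by decide), ck_Q hj] at E11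
  refine ⟨?_, ?_, ?_, ?_⟩ <;> simp only [mm, ss] <;> linarith

lemma pppack {k t : ℕ} {q : Fin (k + 1) × Fin 2 → Fin (k + 1) → ℝ} (hM : Master k t q)
    {i j : Fin (k + 1)} (hi : (i : ℕ) < t) (hj : (j : ℕ) < t) (hij : i ≠ j) :
    ss q i (Fin.last k) + ss q j (Fin.last k) = 0 ∧
    mm q i i - mm q j i - mm q i j + mm q j j = 0 ∧
    ss q j i = ss q j j + mm q j (Fin.last k) - mm q i (Fin.last k) := by
  have E00 := hM i j hij 0 0
  have E01 := hM i j hij 0 1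
  have E10 := hM i j hij 1 0
  have E11 := hM i j hij 1 1
  rw [sg_P hi, sg_P hj, ck_P0 hi rfl, ck_P0 hj rfl] at E00
  rw [sg_P hi, sg_P hj, ck_P0 hi rfl, ck_P1 hj (by decide)] at E01
  rw [sg_P hi, sg_P hj, ck_P1 hi (by decide), ck_P0 hj rfl] at E10
  rw [sg_P hi, sg_P hj, ck_P1 hi (by decide), ck_P1 hj (by decide)] at E11
  refine ⟨?_, ?_, ?_⟩ <;> simp only [mm, ss] <;> linarith

lemma dot_formula (k t : ℕ) (x y : Fin (k + 1) × Fin 2) (w : Fin (k + 1) → ℝ) :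
    (ppt k t x - ppt k t y) ⬝ᵥ w
      = sg t x.1 x.2 * w x.1 - sg t y.1 y.2 * w y.1
        + (ck t x.1 x.2 - ck t y.1 y.2) * w (Fin.last k) := by
  simp only [ppt, sub_dotProduct, add_dotProduct, single_dotProduct]
  ring

lemma sg_succ (t : ℕ) {n : ℕ} (i : Fin n) (e : Fin 2) :
    sg t i (e + 1) = (if (i : ℕ) < t then 1 else -1) * sg t i e := by
  by_cases h : (i : ℕ) < t
  · rw [sg_P h, sg_P h, if_pos h, mul_one]
  · rw [if_neg h]
    by_cases he : e = 0
    · rw [sg_Q0 h he, sg_Q1 h (by subst he; decide), mul_one]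
    · have he1 : e = 1 := Fin.eq_one_of_ne_zero e he
      rw [sg_Q1 h he, sg_Q0 h (by subst he1; decide), mul_neg_one, neg_neg]

lemma ck_succ (t : ℕ) {n : ℕ} (i : Fin n) (e : Fin 2) :
    ck t i (e + 1) = - ck t i e := by
  by_cases h : (i : ℕ) < t
  · by_cases he : e = 0
    · rw [ck_P0 h he, ck_P1 h (by subst he; decide)]
    · have he1 : e = 1 := Fin.eq_one_of_ne_zero e he
      rw [ck_P1 h he, ck_P0 h (by subst he1; decide), neg_neg]
  · rw [ck_Q h, ck_Q h, neg_zero]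

lemma cross_adj {k : ℕ} {i j : Fin (k + 1)} (h : i ≠ j) (e f : Fin 2) :
    (crossGraph k).Adj (i, e) (j, f) := by
  rw [crossGraph, SimpleGraph.fromRel_adj]
  exact ⟨fun hc => h (congrArg Prod.fst hc), Or.inl h⟩

lemma ppt_sym (k t : ℕ) (ht : t ≤ k) (x : Fin (k + 1) × Fin 2) :
    ppt k t (antipode k x) = Itd t (k + 1) *ᵥ ppt k t x := by
  obtain ⟨i, e⟩ := x
  have hκ : ¬ ((Fin.last k : Fin (k + 1)) : ℕ) < t := by
    rw [Fin.val_last]; omega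
  funext l
  rw [Itd, Matrix.mulVec_diagonal]
  show ppt k t (i, e + 1) l = _
  simp only [ppt, Pi.add_apply, Pi.single_apply]
  rcases eq_or_ne l i with rfl | hli
  · rcases eq_or_ne l (Fin.last k) with h2 | h2
    · have hlt : ¬ ((l : ℕ) < t) := by rw [h2]; exact hκ
      rw [if_pos rfl, if_pos rfl, if_pos h2, if_pos h2, if_neg hlt, ck_Q hlt, ck_Q hlt,
        sg_succ, if_neg hlt]
      ring
    · rw [if_pos rfl, if_pos rfl, if_neg h2, if_neg h2, sg_succ]
      ring
  · rcases eq_or_ne l (Fin.last k) with rfl | h2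
    · rw [if_neg hli, if_neg hli, if_pos rfl, if_pos rfl, ck_succ, if_neg hκ]
      ring
    · rw [if_neg hli, if_neg hli, if_neg h2, if_neg h2]
      ring

end Statement7Aux

/-- `Γ`-rigidity of the crosspolytope graph. -/
theorem statement7 (k t : ℕ) (hk : 2 ≤ k) (ht : t ≤ k) (hkt : ¬ (k = 2 ∧ t = 1)) :
    GammaRigid (k + 1) (crossGraph k) Set.univ Set.univ (antipode k)
      (Itd t (k + 1)) := by
  classical
  open Statement7Aux in
  refine ⟨ppt k t, fun x _ => ppt_sym k t ht x, ?_⟩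
  intro q hq
  have hκ : ¬ ((Fin.last k : Fin (k + 1)) : ℕ) < t := by
    rw [Fin.val_last]; omega
  have hM : Statement7Aux.Master k t q := by
    intro i j hij e f
    have h0 := hq (i, e) (Set.mem_univ _) (j, f) (Set.mem_univ _)
      (Statement7Aux.cross_adj hij e f)
    rw [Statement7Aux.dot_formula] at h0
    simpa [Pi.sub_apply] using h0
  -- abbreviations
  set m := Statement7Aux.mm q with hmdef
  set s := Statement7Aux.ss q with hsdef
  set κ : Fin (k + 1) := Fin.last k with hκdef
  -- Fact F1 : s κ κ = 0
  have F1 : s κ κ = 0 := by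
    by_cases ht2 : 2 ≤ t
    · have h0t : ((⟨0, by omega⟩ : Fin (k + 1)) : ℕ) < t := by show 0 < t; omega
      have h1t : ((⟨1, by omega⟩ : Fin (k + 1)) : ℕ) < t := by show 1 < t; omega
      have hne : (⟨0, by omega⟩ : Fin (k + 1)) ≠ ⟨1, by omega⟩ := by
        simp only [ne_eq, Fin.mk.injEq]; omega
      have pp := (Statement7Aux.pppack hM h0t h1t hne).1
      have pq0 := (Statement7Aux.pqpack hM h0t hκ).1
      have pq1 := (Statement7Aux.pqpack hM h1t hκ).1
      linarith
    · have htk : t + 2 ≤ k := by omega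
      have h1 : ¬ ((⟨t, by omega⟩ : Fin (k + 1)) : ℕ) < t := by show ¬ t < t; omega
      have h2 : ¬ ((⟨t + 1, by omega⟩ : Fin (k + 1)) : ℕ) < t := by
        show ¬ t + 1 < t; omega
      have h12 : (⟨t, by omega⟩ : Fin (k + 1)) ≠ ⟨t + 1, by omega⟩ := by
        simp only [ne_eq, Fin.mk.injEq]; omega
      have h1κ : (⟨t, by omega⟩ : Fin (k + 1)) ≠ κ := by
        simp only [hκdef, ne_eq, Fin.ext_iff, Fin.val_last]; omega
      have h2κ : (⟨t + 1, by omega⟩ : Fin (k + 1)) ≠ κ := by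
        simp only [hκdef, ne_eq, Fin.ext_iff, Fin.val_last]; omega
      have q12 := (Statement7Aux.qpack hM h1 h2 h12).2.1
      have q1κ := (Statement7Aux.qpack hM h1 hκ h1κ).2.1
      have q2κ := (Statement7Aux.qpack hM h2 hκ h2κ).2.1
      linarith
  -- F2 : diagonal of s vanishes on Q
  have F2 : ∀ j : Fin (k + 1), ¬ ((j : ℕ) < t) → s j j = 0 := by
    intro j hj
    rcases eq_or_ne j κ with rfl | hne
    · exact F1
    · have := (Statement7Aux.qpack hM hj hκ hne).2.1
      linarith
  -- F3 : s i κ = 0 for i ∈ P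
  have F3 : ∀ i : Fin (k + 1), (i : ℕ) < t → s i κ = 0 := by
    intro i hi
    have := (Statement7Aux.pqpack hM hi hκ).1
    linarith
  -- F6 : m i i = m κ i for i ∈ P
  have F6 : ∀ i : Fin (k + 1), (i : ℕ) < t → m i i = m κ i := by
    intro i hi
    have := (Statement7Aux.pqpack hM hi hκ).2.1
    have h3 := F3 i hi
    linarith
  -- F4 : m j l = m κ l for j ∈ Q
  have F4 : ∀ j : Fin (k + 1), ¬ ((j : ℕ) < t) → ∀ l, m j l = m κ l := by
    intro j hj l
    rcases eq_or_ne j κ with rfl | hjκ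
    · rfl
    by_cases hl : (l : ℕ) < t
    · have h1 := (Statement7Aux.pqpack hM hl hj).2.1
      have h2 := (Statement7Aux.pqpack hM hl hκ).2.1
      have h3 := F2 j hj
      have h4 := F3 l hl
      linarith
    · rcases eq_or_ne l j with rfl | hlj
      · have := (Statement7Aux.qpack hM hκ hl (Ne.symm hjκ)).2.2.1
        linarith
      · rcases eq_or_ne l κ with rfl | hlκ
        · have := (Statement7Aux.qpack hM hj hκ hjκ).2.2.1
          linarith
        · have h1 := (Statement7Aux.qpack hM hj hl (Ne.symm hlj)).2.2.1
          have h2 := (Statement7Aux.qpack hM hκ hl (Ne.symm hlκ)).2.2.1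
          linarith
  -- F5 : s i l = s κ l for i ∈ P
  have F5 : ∀ i : Fin (k + 1), (i : ℕ) < t → ∀ l, s i l = s κ l := by
    intro i hi l
    by_cases hl : (l : ℕ) < t
    · rcases eq_or_ne l i with rfl | hli
      · have h1 := (Statement7Aux.pqpack hM hl hκ).2.2.2
        have h2 := (Statement7Aux.pqpack hM hl hκ).2.2.1
        linarith
      · have h1 := (Statement7Aux.pppack hM hl hi hli).2.2
        have h2 := (Statement7Aux.pqpack hM hi hκ).2.2.2
        have h3 := (Statement7Aux.pqpack hM hl hκ).2.2.1
        linarith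
    · rcases eq_or_ne l κ with rfl | hlκ
      · rw [F3 i hi, F1]
      · have h1 := (Statement7Aux.pqpack hM hi hl).1
        have h2 := (Statement7Aux.qpack hM hl hκ hlκ).1
        linarith
  -- the trivial motion witnessing q
  refine ⟨Matrix.of fun l j => if (j : ℕ) < t then m j l - m κ l else s j l,
    fun l => m κ l, ?_, ?_⟩
  · -- skew-symmetry
    ext a b
    simp only [Matrix.transpose_apply, Matrix.neg_apply, Matrix.of_apply]
    by_cases ha : (a : ℕ) < t <;> by_cases hb : (b : ℕ) < t
    · rw [if_pos ha, if_pos hb]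
      rcases eq_or_ne a b with rfl | hab
      · have := F6 a ha; linarith
      · have h1 := (Statement7Aux.pppack hM ha hb hab).2.1
        have h2 := F6 a ha
        have h3 := F6 b hb
        linarith
    · rw [if_pos ha, if_neg hb]
      have h1 := (Statement7Aux.pqpack hM ha hb).2.2.1
      have h2 := F4 b hb b
      linarith
    · rw [if_neg ha, if_pos hb]
      have h1 := (Statement7Aux.pqpack hM hb ha).2.2.1
      have h2 := F4 a ha a
      linarith
    · rw [if_neg ha, if_neg hb]
      rcases eq_or_ne a b with rfl | hab
      · have := F2 a ha; linarith
      · have := (Statement7Aux.qpack hM ha hb hab).1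
        linarith
  · -- q = S p + c
    intro u _
    obtain ⟨i, e⟩ := u
    have hw : (Matrix.of fun l j => if (j : ℕ) < t then m j l - m κ l else s j l :
          Matrix (Fin (k + 1)) (Fin (k + 1)) ℝ) *ᵥ
        Statement7Aux.ppt k t (i, e)
        = fun l => (if (i : ℕ) < t then m i l - m κ l else s i l)
            * Statement7Aux.sg t i e + s κ l * Statement7Aux.ck t i e := by
      rw [Statement7Aux.ppt, Matrix.mulVec_add, Matrix.mulVec_single, Matrix.mulVec_single]
      funext l
      simp only [Pi.add_apply, Pi.smul_apply, MulOpposite.smul_eq_mul_unop, MulOpposite.unop_op,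
        Matrix.col_apply, Matrix.of_apply, if_neg hκ,
        if_neg (show ¬ ((Fin.last k : Fin (k + 1)) : ℕ) < t from hκ), ← hκdef]
    funext l
    rw [Pi.add_apply, hw]
    show q (i, e) l = (if (i : ℕ) < t then m i l - m κ l else s i l)
        * Statement7Aux.sg t i e + s κ l * Statement7Aux.ck t i e + m κ l
    by_cases hi : (i : ℕ) < t
    · rw [if_pos hi, Statement7Aux.sg_P hi]
      have h5 := F5 i hi l
      by_cases he : e = 0
      · rw [Statement7Aux.ck_P0 hi he, he]
        simp only [hmdef, hsdef, Statement7Aux.mm, Statement7Aux.ss] at h5 ⊢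
        linarith
      · rw [Statement7Aux.ck_P1 hi he, Fin.eq_one_of_ne_zero e he]
        simp only [hmdef, hsdef, Statement7Aux.mm, Statement7Aux.ss] at h5 ⊢
        linarith
    · rw [if_neg hi, Statement7Aux.ck_Q hi]
      have h4 := F4 i hi l
      by_cases he : e = 0
      · rw [Statement7Aux.sg_Q0 hi he, he]
        simp only [hmdef, hsdef, Statement7Aux.mm, Statement7Aux.ss] at h4 ⊢
        linarith
      · rw [Statement7Aux.sg_Q1 hi he, Fin.eq_one_of_ne_zero e he]
        simp only [hmdef, hsdef, Statement7Aux.mm, Statement7Aux.ss] at h4 ⊢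
        linarith
end

section
/- Let (S,*) be a nontrivial ℤ₂-irreducible k-cycle. Then either S is a simplicial k-circuit, or S = T ⊔ T* (the multiset sum of T and T*) for some nontrivial simplicial k-circuit T. Moreover, if the second alternative holds and U is a simplicial k-circuit properly contained in S, then U = T or U = T*. -/
open Matrix

/-! ### Auxiliary machinery for Statement 9 -/

namespace Statement9Aux

open Multiset

variable {V : Type*} [DecidableEq V]

/-- Symmetric difference of multisets. -/
def sd (A B : Multiset (Finset V)) : Multiset (Finset V) := (A - B) + (B - A)

lemma sd_comm (A B : Multiset (Finset V)) : sd A B = sd B A := add_comm _ _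

lemma count_sd (F : Finset V) (A B : Multiset (Finset V)) :
    count F (sd A B) = (count F A - count F B) + (count F B - count F A) := by
  simp [sd, Multiset.count_sub]

lemma sd_le {A B S : Multiset (Finset V)} (hA : A ≤ S) (hB : B ≤ S) : sd A B ≤ S := by
  rw [Multiset.le_iff_count]; intro F
  have h1 := Multiset.le_iff_count.mp hA F
  have h2 := Multiset.le_iff_count.mp hB F
  rw [count_sd]; omega

lemma mem_verts {S : Multiset (Finset V)} {U : Finset V} {v : V}
    (hU : U ∈ S) (hv : v ∈ U) : v ∈ complexVerts S :=
  Finset.mem_sup.mpr ⟨U, Multiset.mem_toFinset.mpr hU, hv⟩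

variable {k : ℕ} {S : Multiset (Finset V)} {σ : V → V}

lemma gg (hinv : IsFreeSimplicialInvolution S σ) {U : Finset V} (hU : U ∈ S) :
    (U.image σ).image σ = U := by
  rw [Finset.image_image]
  have h : U.image (σ ∘ σ) = U.image id :=
    Finset.image_congr (fun v hv => hinv.1 v (mem_verts hU (Finset.mem_coe.mp hv)))
  rw [h, Finset.image_id]

lemma star_star (hinv : IsFreeSimplicialInvolution S σ) {A : Multiset (Finset V)}
    (hA : A ≤ S) : starM σ (starM σ A) = A := by
  show ((A.map (Finset.image σ)).map (Finset.image σ)) = A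
  rw [Multiset.map_map]
  calc A.map (Finset.image σ ∘ Finset.image σ) = A.map id :=
        Multiset.map_congr rfl (fun U hU => gg hinv (Multiset.mem_of_le hA hU))
    _ = A := Multiset.map_id A

lemma star_le_S (hinv : IsFreeSimplicialInvolution S σ) {A : Multiset (Finset V)}
    (hA : A ≤ S) : starM σ A ≤ S := by
  have := Multiset.map_le_map (f := Finset.image σ) hA
  rwa [show S.map (Finset.image σ) = S from hinv.2.1] at this

lemma count_star_of (hinv : IsFreeSimplicialInvolution S σ) {X : Multiset (Finset V)}
    (hX : ∀ a ∈ X, a ∈ S) {a₀ : Finset V} (ha₀ : a₀ ∈ S) :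
    count (Finset.image σ a₀) (starM σ X) = count a₀ X := by
  show count (Finset.image σ a₀) (X.map (Finset.image σ)) = count a₀ X
  rw [Multiset.count_map]
  have hfil : X.filter (fun a => Finset.image σ a₀ = Finset.image σ a)
      = X.filter (fun a => a₀ = a) := by
    refine Multiset.filter_congr (fun a ha => ?_)
    constructor
    · intro e
      rw [← gg hinv ha₀, e, gg hinv (hX a ha)]
    · intro e; rw [e]
  rw [hfil, ← Multiset.countP_eq_card_filter]
  rfl

lemma count_star_zero (hinv : IsFreeSimplicialInvolution S σ) {X : Multiset (Finset V)}
    (hX : ∀ a ∈ X, a ∈ S) {b : Finset V} (hb : ¬ ∃ a ∈ S, Finset.image σ a = b) :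
    count b (starM σ X) = 0 := by
  rw [Multiset.count_eq_zero]
  intro hmem
  obtain ⟨a, ha, hab⟩ := Multiset.mem_map.mp hmem
  exact hb ⟨a, hX a ha, hab⟩

lemma star_sub (hinv : IsFreeSimplicialInvolution S σ) {A B : Multiset (Finset V)}
    (hA : A ≤ S) (hB : B ≤ S) :
    starM σ (A - B) = starM σ A - starM σ B := by
  have hAS : ∀ a ∈ A, a ∈ S := fun a ha => Multiset.mem_of_le hA ha
  have hBS : ∀ a ∈ B, a ∈ S := fun a ha => Multiset.mem_of_le hB ha
  have hABS : ∀ a ∈ A - B, a ∈ S := fun a ha =>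
    Multiset.mem_of_le (le_trans (Multiset.sub_le_self A B) hA) ha
  ext b
  by_cases hb : ∃ a ∈ S, Finset.image σ a = b
  · obtain ⟨a₀, ha₀, rfl⟩ := hb
    rw [Multiset.count_sub, count_star_of hinv hAS ha₀, count_star_of hinv hBS ha₀,
      count_star_of hinv hABS ha₀, Multiset.count_sub]
  · rw [Multiset.count_sub, count_star_zero hinv hABS hb, count_star_zero hinv hAS hb]
    omega

lemma star_add (A B : Multiset (Finset V)) :
    starM σ (A + B) = starM σ A + starM σ B := Multiset.map_add _ _ _

lemma star_sd (hinv : IsFreeSimplicialInvolution S σ) {A B : Multiset (Finset V)}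
    (hA : A ≤ S) (hB : B ≤ S) :
    starM σ (sd A B) = sd (starM σ A) (starM σ B) := by
  unfold sd
  rw [star_add, star_sub hinv hA hB, star_sub hinv hB hA]

lemma cycle_iff {A : Multiset (Finset V)} (hA : IsMultiComplex k A) :
    IsSimplicialCycle k A ↔
      ∀ F : Finset V, F.card = k → (A.countP fun U => F ⊆ U) % 2 = 0 := by
  constructor
  · intro h F hF
    have h2 := h.2 F
    unfold inBoundary at h2
    by_contra hc
    exact h2 ⟨hF, by omega⟩
  · intro h
    refine ⟨hA, fun F hFb => ?_⟩
    obtain ⟨h1, h2⟩ := hFb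
    have := h F h1
    omega

lemma sub_mc (hS : IsMultiComplex k S) {A : Multiset (Finset V)} (hA : A ≤ S) :
    IsMultiComplex k A := fun U hU => hS U (Multiset.mem_of_le hA hU)

lemma star_mc (hS : IsMultiComplex k S) (hinv : IsFreeSimplicialInvolution S σ)
    {A : Multiset (Finset V)} (hA : A ≤ S) : IsMultiComplex k (starM σ A) :=
  sub_mc hS (star_le_S hinv hA)

lemma star_cycle (hS : IsMultiComplex k S) (hinv : IsFreeSimplicialInvolution S σ)
    {A : Multiset (Finset V)} (hA : A ≤ S) (hcA : IsSimplicialCycle k A) :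
    IsSimplicialCycle k (starM σ A) := by
  rw [cycle_iff (star_mc hS hinv hA)]
  rw [cycle_iff (sub_mc hS hA)] at hcA
  intro F hF
  show ((A.map (Finset.image σ)).countP fun U => F ⊆ U) % 2 = 0
  rw [Multiset.countP_map, ← Multiset.countP_eq_card_filter]
  by_cases hex : ∃ U ∈ A, F ⊆ Finset.image σ U
  · obtain ⟨U₀, hU₀, hFU₀⟩ := hex
    have hU₀S : U₀ ∈ S := Multiset.mem_of_le hA hU₀
    have hgU₀S : Finset.image σ U₀ ∈ S := by
      have : Finset.image σ U₀ ∈ S.map (Finset.image σ) :=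
        Multiset.mem_map_of_mem _ hU₀S
      rwa [show S.map (Finset.image σ) = S from hinv.2.1] at this
    have hFv : ∀ v ∈ F, v ∈ complexVerts S := fun v hv => mem_verts hgU₀S (hFU₀ hv)
    have hcongr : ∀ U ∈ A, (F ⊆ Finset.image σ U) = (F.image σ ⊆ U) := by
      intro U hU
      have hUS : U ∈ S := Multiset.mem_of_le hA hU
      apply propext
      constructor
      · intro hsub y hy
        obtain ⟨x, hx, rfl⟩ := Finset.mem_image.mp hy
        obtain ⟨u, hu, hux⟩ := Finset.mem_image.mp (hsub hx)
        rw [← hux, hinv.1 u (mem_verts hUS hu)]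
        exact hu
      · intro hsub x hx
        have hσx : σ x ∈ U := hsub (Finset.mem_image_of_mem σ hx)
        have : σ (σ x) = x := hinv.1 x (hFv x hx)
        exact Finset.mem_image.mpr ⟨σ x, hσx, this⟩
    rw [Multiset.countP_congr rfl hcongr]
    refine hcA (F.image σ) ?_
    rw [Finset.card_image_of_injOn, hF]
    intro x hx y hy hxy
    have hx' := hinv.1 x (hFv x hx)
    have hy' := hinv.1 y (hFv y hy)
    rw [← hx', ← hy', hxy]
  · rw [Multiset.countP_eq_zero.mpr (fun U hU hFU => hex ⟨U, hU, hFU⟩)]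

lemma sd_cycle (hS : IsMultiComplex k S) {A B : Multiset (Finset V)}
    (hA : A ≤ S) (hB : B ≤ S) (hcA : IsSimplicialCycle k A)
    (hcB : IsSimplicialCycle k B) : IsSimplicialCycle k (sd A B) := by
  rw [cycle_iff (sub_mc hS (sd_le hA hB))]
  rw [cycle_iff (sub_mc hS hA)] at hcA
  rw [cycle_iff (sub_mc hS hB)] at hcB
  intro F hF
  have key : sd A B + (A ∩ B + A ∩ B) = A + B := by
    ext G
    rw [Multiset.count_add, Multiset.count_add, Multiset.count_add, count_sd,
      Multiset.count_inter]
    have := le_iff_count.mp hA G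
    have := le_iff_count.mp hB G
    omega
  have hcount := congrArg (Multiset.countP fun U => F ⊆ U) key
  rw [Multiset.countP_add, Multiset.countP_add, Multiset.countP_add] at hcount
  have h1 := hcA F hF
  have h2 := hcB F hF
  omega

/-- Every nonempty proper sub-cycle of a `ℤ₂`-irreducible cycle is exactly half. -/
lemma half (hScyc : IsSimplicialCycle k S) (hinv : IsFreeSimplicialInvolution S σ)
    (hirr : ∀ T : Multiset (Finset V), T ≤ S → T ≠ 0 → T ≠ S → starM σ T = T →
      ¬ IsSimplicialCycle k T)
    {W : Multiset (Finset V)} (hW : W ≤ S) (hW0 : W ≠ 0) (hWS : W ≠ S)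
    (hcW : IsSimplicialCycle k W) : W + starM σ W = S := by
  have hmc := hScyc.1
  set D := sd W (starM σ W) with hD
  have hWstarle : starM σ W ≤ S := star_le_S hinv hW
  have hDle : D ≤ S := sd_le hW hWstarle
  have hDcyc : IsSimplicialCycle k D :=
    sd_cycle hmc hW hWstarle hcW (star_cycle hmc hinv hW hcW)
  have hDstar : starM σ D = D := by
    rw [hD, star_sd hinv hW hWstarle, star_star hinv hW, sd_comm]
  by_cases hD0 : D = 0
  · exfalso
    have hWW : starM σ W = W := by
      ext F
      have := congrArg (count F) hD0
      rw [count_sd, Multiset.count_zero] at this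
      omega
    exact hirr W hW hW0 hWS hWW hcW
  · by_cases hDS : D = S
    · ext F
      have hd := congrArg (count F) hDS
      rw [count_sd] at hd
      have h1 := le_iff_count.mp hW F
      have h2 := le_iff_count.mp hWstarle F
      rw [Multiset.count_add]
      omega
    · exact absurd hDcyc (hirr D hDle hD0 hDS hDstar)

lemma exists_circuit (hmc : IsMultiComplex k S) :
    ∀ n (T : Multiset (Finset V)), Multiset.card T ≤ n → T ≤ S → T ≠ 0 → T ≠ S →
      IsSimplicialCycle k T →
      ∃ T', T' ≤ S ∧ T' ≠ S ∧ IsSimplicialCircuit k T' := by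
  intro n
  induction n with
  | zero =>
    intro T hc _ h0 _ _
    exact absurd (Multiset.card_eq_zero.mp (Nat.le_zero.mp hc)) h0
  | succ n ih =>
    intro T hc hle h0 hTS hcyc
    by_cases hcirc : IsSimplicialCircuit k T
    · exact ⟨T, hle, hTS, hcirc⟩
    · unfold IsSimplicialCircuit at hcirc
      push_neg at hcirc
      obtain ⟨T₂, hT₂T, h₂0, h₂T, hcyc₂⟩ := hcirc hcyc h0
      have hlt : Multiset.card T₂ < Multiset.card T :=
        Multiset.card_lt_card (lt_of_le_of_ne hT₂T h₂T)
      have hcardS : Multiset.card T ≤ Multiset.card S := Multiset.card_le_card hle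
      refine ih T₂ (by omega) (le_trans hT₂T hle) h₂0 ?_ hcyc₂
      intro e
      rw [e] at hlt
      omega

end Statement9Aux

/-- Structure of nontrivial `ℤ₂`-irreducible `k`-cycles. -/
theorem statement9 {V : Type*} [DecidableEq V] (k : ℕ) (hk : 1 ≤ k)
    (S : Multiset (Finset V)) (σ : V → V) (h : IsZ2IrreducibleCycle k S σ)
    (hnt : ¬ IsTrivialZ2Irreducible S σ) :
    IsSimplicialCircuit k S ∨
      ∃ T : Multiset (Finset V), IsSimplicialCircuit k T ∧ ¬ IsTrivialCircuit T ∧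
        S = T + starM σ T ∧
        ∀ U : Multiset (Finset V), U ≤ S → U ≠ S → IsSimplicialCircuit k U →
          U = T ∨ U = starM σ T := by
  classical
  open Multiset Statement9Aux in
  obtain ⟨⟨hScyc, hinv⟩, hSne, hirr⟩ := h
  have hmc : IsMultiComplex k S := hScyc.1
  have hss : S.map (Finset.image σ) = S := hinv.2.1
  -- Step 0 : S has no repeated facets
  have hnodup : S.Nodup := by
    rw [Multiset.nodup_iff_count_le_one]
    by_contra hnd
    push_neg at hnd
    obtain ⟨F, hF2⟩ := hnd
    have hF2 : 2 ≤ Multiset.count F S := hF2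
    have hFS : F ∈ S := Multiset.count_pos.mp (by omega)
    have hFcard : F.card = k + 1 := hmc F hFS
    have hFne : F.Nonempty := Finset.card_pos.mp (by omega)
    have hgFne : F.image σ ≠ F := hinv.2.2 F hFne ⟨F, hFS, subset_rfl⟩
    have hFv : ∀ v ∈ F, v ∈ complexVerts S := fun v hv => mem_verts hFS hv
    -- the image facet also has multiplicity at least 2
    have hrep : Multiset.replicate 2 F ≤ S := Multiset.le_count_iff_replicate_le.mp hF2
    have hrep' : Multiset.replicate 2 (F.image σ) ≤ S := by
      have h1 : (Multiset.replicate 2 F).map (Finset.image σ) ≤ S.map (Finset.image σ) :=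
        Multiset.map_le_map hrep
      rwa [Multiset.map_replicate, hss] at h1
    have hgF2 : 2 ≤ Multiset.count (F.image σ) S :=
      Multiset.le_count_iff_replicate_le.mpr hrep'
    set M : Multiset (Finset V) :=
      Multiset.replicate 2 F + Multiset.replicate 2 (F.image σ) with hMdef
    have hMle : M ≤ S := by
      rw [Multiset.le_iff_count]
      intro X
      rw [hMdef, Multiset.count_add, Multiset.count_replicate, Multiset.count_replicate]
      by_cases h1 : F = X
      · subst h1
        rw [if_pos rfl, if_neg hgFne]
        omega
      · rw [if_neg h1]
        by_cases h2 : F.image σ = X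
        · subst h2
          rw [if_pos rfl]
          omega
        · rw [if_neg h2]
          omega
    have hM0 : M ≠ 0 := by
      intro e
      have : Multiset.card M = 4 := by
        rw [hMdef, Multiset.card_add, Multiset.card_replicate, Multiset.card_replicate]
      rw [e] at this
      simp at this
    have hMstar : starM σ M = M := by
      show M.map (Finset.image σ) = M
      rw [hMdef, Multiset.map_add, Multiset.map_replicate, Multiset.map_replicate,
        gg hinv hFS, add_comm]
    have hgFcard : (F.image σ).card = k + 1 := by
      rw [Finset.card_image_of_injOn, hFcard]
      intro x hx y hy hxy
      have hx' := hinv.1 x (hFv x hx)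
      have hy' := hinv.1 y (hFv y hy)
      rw [← hx', ← hy', hxy]
    have hMmc : IsMultiComplex k M := by
      intro U hU
      rw [hMdef] at hU
      rcases Multiset.mem_add.mp hU with hU | hU
      · rw [Multiset.eq_of_mem_replicate hU]; exact hFcard
      · rw [Multiset.eq_of_mem_replicate hU]; exact hgFcard
    have hMcyc : IsSimplicialCycle k M := by
      rw [cycle_iff hMmc]
      intro G hG
      have hcrep : ∀ (X : Finset V),
          (Multiset.countP (fun U => G ⊆ U) (Multiset.replicate 2 X))
            = if G ⊆ X then 2 else 0 := by
        intro X
        rw [show (Multiset.replicate 2 X) = X ::ₘ X ::ₘ 0 from rfl]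
        rw [Multiset.countP_cons, Multiset.countP_cons, Multiset.countP_zero]
        split_ifs <;> omega
      rw [hMdef, Multiset.countP_add, hcrep, hcrep]
      split_ifs <;> omega
    have hMS : M = S := by
      by_contra hMS
      exact hirr M hMle hM0 hMS hMstar hMcyc
    apply hnt
    refine ⟨F, ?_, ?_⟩
    · rw [← hMS]; rfl
    · rw [Finset.disjoint_left]
      intro a haF hagF
      set K : Finset V := F ∩ F.image σ with hK
      have hKne : K.Nonempty := ⟨a, Finset.mem_inter.mpr ⟨haF, hagF⟩⟩
      have hKF : K ⊆ F := Finset.inter_subset_left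
      have hKK : K.image σ = K := by
        apply Finset.Subset.antisymm
        · intro y hy
          obtain ⟨x, hx, rfl⟩ := Finset.mem_image.mp hy
          have hxF : x ∈ F := (Finset.mem_inter.mp hx).1
          obtain ⟨z, hz, hzx⟩ := Finset.mem_image.mp (Finset.mem_inter.mp hx).2
          have hσx : σ x = z := by rw [← hzx, hinv.1 z (hFv z hz)]
          refine Finset.mem_inter.mpr ⟨hσx ▸ hz, ?_⟩
          exact Finset.mem_image_of_mem σ hxF
        · intro x hx
          have hxF : x ∈ F := (Finset.mem_inter.mp hx).1
          obtain ⟨z, hz, hzx⟩ := Finset.mem_image.mp (Finset.mem_inter.mp hx).2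
          have hσx : σ x = z := by rw [← hzx, hinv.1 z (hFv z hz)]
          have hσxK : σ x ∈ K := by
            refine Finset.mem_inter.mpr ⟨hσx ▸ hz, Finset.mem_image_of_mem σ hxF⟩
          have : σ (σ x) = x := hinv.1 x (hFv x hxF)
          exact Finset.mem_image.mpr ⟨σ x, hσxK, this⟩
      exact hinv.2.2 K hKne ⟨F, hFS, hKF⟩ hKK
  -- Step 1 : dichotomy
  by_cases hcircS : IsSimplicialCircuit k S
  · exact Or.inl hcircS
  right
  have hex : ∃ T : Multiset (Finset V),
      T ≤ S ∧ T ≠ 0 ∧ T ≠ S ∧ IsSimplicialCycle k T := by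
    unfold IsSimplicialCircuit at hcircS
    push_neg at hcircS
    obtain ⟨T, h1, h2, h3, h4⟩ := hcircS hScyc hSne
    exact ⟨T, h1, h2, h3, h4⟩
  obtain ⟨T₁, hT₁le, hT₁0, hT₁S, hT₁cyc⟩ := hex
  obtain ⟨T, hTle, hTS, hTcirc⟩ :=
    exists_circuit hmc (Multiset.card T₁) T₁ le_rfl hT₁le hT₁0 hT₁S hT₁cyc
  have hT0 : T ≠ 0 := hTcirc.2.1
  have hTsum : T + starM σ T = S := half hScyc hinv hirr hTle hT0 hTS hTcirc.1
  refine ⟨T, hTcirc, ?_, hTsum.symm, ?_⟩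
  · rintro ⟨F, rfl⟩
    have h2 : Multiset.count F ({F, F} : Multiset (Finset V)) = 2 := by
      rw [show ({F, F} : Multiset (Finset V)) = F ::ₘ F ::ₘ 0 from rfl]
      simp
    have h3 := Multiset.le_iff_count.mp hTle F
    have h4 := Multiset.nodup_iff_count_le_one.mp hnodup F
    omega
  · intro U hUle hUS hUcirc
    by_cases hUT : U = T
    · exact Or.inl hUT
    by_cases hUT' : U = starM σ T
    · exact Or.inr hUT'
    exfalso
    have hUsum : U + starM σ U = S := half hScyc hinv hirr hUle hUcirc.2.1 hUS hUcirc.1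
    set Y : Multiset (Finset V) := sd U T with hYdef
    have hYle : Y ≤ S := sd_le hUle hTle
    have hYcyc : IsSimplicialCycle k Y := sd_cycle hmc hUle hTle hUcirc.1 hTcirc.1
    have hY0 : Y ≠ 0 := by
      intro e
      apply hUT
      ext F
      have he := congrArg (Multiset.count F) e
      rw [hYdef, count_sd, Multiset.count_zero] at he
      omega
    have hYS : Y ≠ S := by
      intro e
      apply hUT'
      have hUTsum : U + T = S := by
        ext F
        have h1 := congrArg (Multiset.count F) e
        rw [hYdef, count_sd] at h1
        have hu := Multiset.le_iff_count.mp hUle F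
        have ht := Multiset.le_iff_count.mp hTle F
        rw [Multiset.count_add]
        omega
      have hcan : U + T = starM σ T + T := by
        rw [hUTsum, ← hTsum, add_comm]
      exact add_right_cancel hcan
    have hYstar : starM σ Y = Y := by
      rw [hYdef, star_sd hinv hUle hTle]
      have hU' : starM σ U = S - U :=
        eq_tsub_of_add_eq (by rw [add_comm]; exact hUsum)
      have hT' : starM σ T = S - T :=
        eq_tsub_of_add_eq (by rw [add_comm]; exact hTsum)
      rw [hU', hT']
      ext F
      rw [count_sd, count_sd, Multiset.count_sub, Multiset.count_sub]
      have hu := Multiset.le_iff_count.mp hUle F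
      have ht := Multiset.le_iff_count.mp hTle F
      omega
    exact hirr Y hYle hY0 hYS hYstar hYcyc
end
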